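/- arXiv:2205.11210 — 3 statements merged into one kernel-verified Lean document; each statement's English description precedes it below -/
import Mathlib

section
/- Let G_k=(V,E,k) be a strongly connected labeled simple digraph. Then the vector of tree constants K_k ∈ ℝ^V is componentwise positive, it satisfies A_k K_k = 0, and the kernel of the Laplacian matrix A_k equals the linear span of K_k. -/
open Matrix BigOperators Finset

variable {V : Type*}

/-- Directed reachability in the digraph with edge set `F`. -/
def dReach (F : Finset (V × V)) : V → V → Prop :=
  Relation.ReflTransGen fun a b => (a, b) ∈ F

/-- Reachability in the underlying undirected graph of the digraph with edge set `F`. -/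
def uReach (F : Finset (V × V)) : V → V → Prop :=
  Relation.ReflTransGen fun a b => (a, b) ∈ F ∨ (b, a) ∈ F

/-- A digraph is strongly connected if every vertex reaches every other vertex. -/
def StronglyConnected (F : Finset (V × V)) : Prop :=
  ∀ i j : V, dReach F i j

/-- A simple digraph has no self-loops. -/
def NoSelfLoops (F : Finset (V × V)) : Prop :=
  ∀ e ∈ F, e.1 ≠ e.2

/-- The edge set `F` contains a directed cycle. -/
def HasDirectedCycle (F : Finset (V × V)) : Prop :=
  ∃ v : V, Relation.TransGen (fun a b => (a, b) ∈ F) v v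

/-- The Laplacian matrix `A_k` of the labeled digraph `(V, F, k)`:
`(A_k)_{i,j} = k_{j→i}` if `(j→i) ∈ F`, `(A_k)_{i,i} = -∑_{(i→j)∈F} k_{i→j}`, and `0` otherwise. -/
noncomputable def dLaplacian [Fintype V] [DecidableEq V]
    (F : Finset (V × V)) (k : V × V → ℝ) : Matrix V V ℝ :=
  Matrix.of fun i j =>
    if i = j then -(∑ e ∈ F.filter (fun e => e.1 = i), k e)
    else if (j, i) ∈ F then k (j, i) else 0

/-- `T` is a directed spanning tree of the strongly connected digraph `E`, rooted at `i`
and directed towards the root: no directed cycle, and every vertex except `i`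
is the source of exactly one edge. -/
def IsSpanningTreeTo [DecidableEq V] (E : Finset (V × V)) (i : V)
    (T : Finset (V × V)) : Prop :=
  T ⊆ E ∧ ¬ HasDirectedCycle T ∧
    ∀ j : V, j ≠ i → (T.filter (fun e => e.1 = j)).card = 1

open scoped Classical in
/-- The tree constant `(K_k)_i = ∑_{T ∈ T_i} ∏_{(j→j')∈T} k_{j→j'}`. -/
noncomputable def treeConst [Fintype V] [DecidableEq V]
    (E : Finset (V × V)) (k : V × V → ℝ) (i : V) : ℝ :=
  ∑ T ∈ E.powerset.filter (fun T => IsSpanningTreeTo E i T), ∏ e ∈ T, k e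

/-- The incidence matrix of the digraph with edge set `F`: in the column of edge `(j→j')`,
entry `-1` in row `j`, entry `+1` in row `j'`, and `0` elsewhere. -/
noncomputable def incidence [DecidableEq V] (F : Finset (V × V)) :
    Matrix V {e : V × V // e ∈ F} ℝ :=
  Matrix.of fun i e =>
    (if (e : V × V).2 = i then (1 : ℝ) else 0) - (if (e : V × V).1 = i then (1 : ℝ) else 0)


open Relation

section Aux
variable [Fintype V] [DecidableEq V]
open scoped Classical

lemma wf_of_acyclic {T : Finset (V × V)} (h : ¬ HasDirectedCycle T) :
    WellFounded (fun a b : V => (b, a) ∈ T) := by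
  have hir : IsIrrefl V (TransGen (Function.swap (fun a b : V => (a, b) ∈ T))) :=
    ⟨fun v hv => h ⟨v, Relation.transGen_swap.mp hv⟩⟩
  have htr : IsTrans V (TransGen (Function.swap (fun a b : V => (a, b) ∈ T))) :=
    ⟨fun _ _ _ => TransGen.trans⟩
  exact Subrelation.wf (fun h => TransGen.single h)
    (@Finite.wellFounded_of_trans_of_irrefl _ _ _ htr hir)

lemma tree_reach {T : Finset (V × V)} {i : V} (hc : ¬ HasDirectedCycle T)
    (hdeg : ∀ j : V, j ≠ i → (T.filter (fun e => e.1 = j)).card = 1) (v : V) :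
    ReflTransGen (fun a b => (a, b) ∈ T) v i := by
  refine (wf_of_acyclic hc).induction (C := fun v => ReflTransGen (fun a b => (a, b) ∈ T) v i) v ?_
  intro v ih
  by_cases hv : v = i
  · subst hv; exact ReflTransGen.refl
  · obtain ⟨e, he⟩ := Finset.card_eq_one.mp (hdeg v hv)
    have heT : e ∈ T ∧ e.1 = v := by
      have : e ∈ T.filter (fun e => e.1 = v) := he ▸ Finset.mem_singleton_self e
      simpa using this
    have hev : (v, e.2) ∈ T := by
      have h1 := heT.1
      have : e = (v, e.2) := by rw [← heT.2]
      rwa [this] at h1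
    exact ReflTransGen.head hev (ih e.2 hev)

lemma root_no_out {T : Finset (V × V)} {i : V} (hc : ¬ HasDirectedCycle T)
    (hdeg : ∀ j : V, j ≠ i → (T.filter (fun e => e.1 = j)).card = 1) :
    ∀ e ∈ T, e.1 ≠ i := by
  intro e he h
  apply hc
  refine ⟨i, TransGen.head' (show (i, e.2) ∈ T from ?_) (tree_reach hc hdeg e.2)⟩
  have : e = (i, e.2) := by rw [← h]
  rwa [this] at he

def iterRel (E : Finset (V × V)) : ℕ → V → V → Prop
  | 0, a, b => a = b
  | (n+1), a, b => ∃ c, (a, c) ∈ E ∧ iterRel E n c b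

lemma reach_to_iterRel {E : Finset (V × V)} {a b : V}
    (h : ReflTransGen (fun a b => (a, b) ∈ E) a b) : ∃ n, iterRel E n a b := by
  induction h using ReflTransGen.head_induction_on with
  | refl => exact ⟨0, rfl⟩
  | head h' _ ih => obtain ⟨n, hn⟩ := ih; exact ⟨n + 1, _, h', hn⟩

lemma exists_tree (E : Finset (V × V)) (hsc : ∀ i j : V, dReach E i j) (i : V) :
    ∃ T, IsSpanningTreeTo E i T := by
  have hex : ∀ j : V, ∃ n, iterRel E n j i := fun j => reach_to_iterRel (hsc j i)
  set d : V → ℕ := fun j => Nat.find (hex j) with hd_def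
  have hd : ∀ j, iterRel E (d j) j i := fun j => Nat.find_spec (hex j)
  have hstep : ∀ j : V, j ≠ i → ∃ c, (j, c) ∈ E ∧ d c < d j := by
    intro j hj
    cases hdj : d j with
    | zero =>
      exfalso; apply hj
      have := hd j; rw [hdj] at this; exact this
    | succ m =>
      have := hd j; rw [hdj] at this
      obtain ⟨c, hc, hit⟩ := this
      exact ⟨c, hc, lt_of_le_of_lt (Nat.find_le hit) (by omega)⟩
  choose! p hp hlt using hstep
  set T : Finset (V × V) := (univ.erase i).image (fun j => (j, p j)) with hT_def
  have hmemT : ∀ a b : V, (a, b) ∈ T → a ≠ i ∧ b = p a := by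
    intro a b hab
    simp only [hT_def, mem_image, mem_erase, mem_univ, and_true] at hab
    obtain ⟨j, hj, heq⟩ := hab
    injection heq with h1 h2
    subst h1; subst h2
    exact ⟨hj, rfl⟩
  refine ⟨T, ?_, ?_, ?_⟩
  · rintro ⟨a, b⟩ hab
    obtain ⟨ha, rfl⟩ := hmemT a b hab
    exact hp a ha
  · rintro ⟨v, hcyc⟩
    have hdec : ∀ a b : V, TransGen (fun a b => (a, b) ∈ T) a b → d b < d a := by
      intro a b h
      induction h with
      | single h =>
        obtain ⟨ha, rfl⟩ := hmemT _ _ h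
        exact hlt _ ha
      | tail _ h ih =>
        obtain ⟨ha, rfl⟩ := hmemT _ _ h
        exact lt_trans (hlt _ ha) ih
    exact lt_irrefl _ (hdec v v hcyc)
  · intro j hj
    have : T.filter (fun e => e.1 = j) = {(j, p j)} := by
      ext e
      simp only [mem_filter, mem_singleton]
      constructor
      · rintro ⟨he, h1⟩
        obtain ⟨a, b⟩ := e
        obtain ⟨_, rfl⟩ := hmemT a b he
        simp only at h1
        subst h1; rfl
      · rintro rfl
        refine ⟨?_, rfl⟩
        simp only [hT_def, mem_image, mem_erase, mem_univ, and_true]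
        exact ⟨j, hj, rfl⟩
    rw [this, Finset.card_singleton]

section Fun
variable {F : Finset (V × V)} {f : V → V} (hf : ∀ v w : V, ((v, w) ∈ F ↔ w = f v))
include hf

lemma iter_reach (n : ℕ) (v : V) :
    ReflTransGen (fun a b => (a, b) ∈ F) v (f^[n] v) := by
  induction n generalizing v with
  | zero => exact ReflTransGen.refl
  | succ n ih =>
    rw [Function.iterate_succ_apply]
    exact ReflTransGen.head ((hf v (f v)).mpr rfl) (ih (f v))

lemma reach_iter {a b : V} (h : ReflTransGen (fun a b => (a, b) ∈ F) a b) :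
    ∃ n, f^[n] a = b := by
  induction h using ReflTransGen.head_induction_on with
  | refl => exact ⟨0, rfl⟩
  | head h' _ ih =>
    obtain ⟨n, hn⟩ := ih
    rename_i a c _
    refine ⟨n + 1, ?_⟩
    rw [Function.iterate_succ_apply, ← (hf a c).mp h', hn]

lemma transGen_iter {T : Finset (V × V)} (hTF : T ⊆ F) {a b : V}
    (h : TransGen (fun a b => (a, b) ∈ T) a b) :
    ∃ l, 0 < l ∧ f^[l] a = b ∧ ∀ s < l, (f^[s] a, f^[s+1] a) ∈ T := by
  induction h with
  | single h =>
    refine ⟨1, one_pos, ?_, ?_⟩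
    · rw [Function.iterate_one, ← (hf _ _).mp (hTF h)]
    · intro s hs
      interval_cases s
      simpa [← (hf _ _).mp (hTF h)] using h
  | tail hab h ih =>
    obtain ⟨l, hl, hla, hedge⟩ := ih
    refine ⟨l + 1, Nat.succ_pos l, ?_, ?_⟩
    · rw [Function.iterate_succ_apply', hla, ← (hf _ _).mp (hTF h)]
    · intro s hs
      rcases Nat.lt_succ_iff_lt_or_eq.mp hs with hs | rfl
      · exact hedge s hs
      · have h1 : f^[s] a = _ := hla
        have h2 : f^[s+1] a = f _ := Function.iterate_succ_apply' f s a
        rw [h1] at h2 ⊢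
        rw [h2, ← (hf _ _).mp (hTF h)]
        exact h

omit hf in
lemma iter_cycle_mul {l : ℕ} {v : V} (hl : f^[l] v = v) (q : ℕ) : f^[l * q] v = v := by
  induction q with
  | zero => simp
  | succ q ih =>
    have : l * (q + 1) = l * q + l := by ring
    rw [this, Function.iterate_add_apply, hl, ih]

omit hf in
lemma iter_mod {l : ℕ} {v : V} (hl : f^[l] v = v) (n : ℕ) : f^[n] v = f^[n % l] v := by
  conv_lhs => rw [← Nat.mod_add_div n l]
  rw [Function.iterate_add_apply, iter_cycle_mul hl]

omit hf in
lemma pred_unique' {a b i : V} (ha : f a = i) (hb : f b = i)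
    (hra : ∃ p, f^[p] i = a) (hrb : ∃ q, f^[q] i = b) : a = b := by
  obtain ⟨p, hp⟩ := hra
  obtain ⟨q, hq⟩ := hrb
  have hpi : f^[p + 1] i = i := by rw [Function.iterate_succ_apply', hp, ha]
  have hqi : f^[q + 1] i = i := by rw [Function.iterate_succ_apply', hq, hb]
  have h1 : f^[p + (p+1) * q] i = a := by
    rw [Function.iterate_add_apply, iter_cycle_mul hpi, hp]
  have h2 : f^[q + (q+1) * p] i = b := by
    rw [Function.iterate_add_apply, iter_cycle_mul hqi, hq]
  rw [← h1, ← h2]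
  congr 1
  ring
end Fun

lemma row_identity (E : Finset (V × V)) (hloop : NoSelfLoops E) (k : V × V → ℝ) (i : V) :
    ∑ e ∈ E.filter (fun e => e.2 = i), k e * treeConst E k e.1
      = (∑ e ∈ E.filter (fun e => e.1 = i), k e) * treeConst E k i := by
  set Ti : V → Finset (Finset (V × V)) :=
    fun j => E.powerset.filter (fun T => IsSpanningTreeTo E j T) with hTi
  have hKi : ∀ j, treeConst E k j = ∑ T ∈ Ti j, ∏ e ∈ T, k e := fun j => rfl
  have hTi_mem : ∀ {j : V} {T : Finset (V × V)}, T ∈ Ti j ↔ T ⊆ E ∧ ¬HasDirectedCycle T ∧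
      ∀ v : V, v ≠ j → (T.filter (fun e => e.1 = v)).card = 1 := by
    intro j T
    simp only [hTi, mem_filter, mem_powerset]
    simp only [IsSpanningTreeTo, and_assoc]
    tauto
  set C : Finset (Finset (V × V)) := E.powerset.filter (fun F =>
      (∀ v : V, (F.filter (fun e => e.1 = v)).card = 1) ∧
      ∀ v : V, ReflTransGen (fun a b => (a, b) ∈ F) v i) with hC
  have hC_mem : ∀ {F : Finset (V × V)}, F ∈ C ↔ F ⊆ E ∧
      (∀ v : V, (F.filter (fun e => e.1 = v)).card = 1) ∧
      ∀ v : V, ReflTransGen (fun a b => (a, b) ∈ F) v i := by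
    intro F
    simp only [hC, mem_filter, mem_powerset, and_assoc]
  have hsucc : ∀ F : Finset (V × V), (∀ v : V, (F.filter (fun e => e.1 = v)).card = 1) →
      ∃ f : V → V, ∀ v w : V, ((v, w) ∈ F ↔ w = f v) := by
    intro F hdeg
    have h : ∀ v : V, ∃ u : V, ∀ w, ((v, w) ∈ F ↔ w = u) := by
      intro v
      obtain ⟨e, he⟩ := Finset.card_eq_one.mp (hdeg v)
      have heF : e ∈ F ∧ e.1 = v := by
        have : e ∈ F.filter (fun e => e.1 = v) := he ▸ Finset.mem_singleton_self e
        simpa using this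
      refine ⟨e.2, fun w => ⟨fun hw => ?_, fun hw => ?_⟩⟩
      · have : (v, w) ∈ F.filter (fun e => e.1 = v) := mem_filter.mpr ⟨hw, rfl⟩
        rw [he, mem_singleton] at this
        rw [← this]
      · subst hw
        have he' : e = (v, e.2) := by rw [← heF.2]
        rw [← he']; exact heF.1
    choose f hfx using h
    exact ⟨f, hfx⟩
  have hnotmem : ∀ (j : V) (e : V × V), e.1 = j → ∀ T ∈ Ti j, e ∉ T := by
    intro j e he1 T hT heT
    obtain ⟨-, hc, hdeg⟩ := hTi_mem.mp hT
    exact root_no_out hc hdeg e heT he1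
  have hinsA : ∀ e ∈ E.filter (fun e => e.1 = i), ∀ T ∈ Ti i, insert e T ∈ C := by
    intro e he T hT
    obtain ⟨heE, he1⟩ := mem_filter.mp he
    obtain ⟨hTE, hc, hdeg⟩ := hTi_mem.mp hT
    refine hC_mem.mpr ⟨insert_subset heE hTE, fun v => ?_, fun v => ?_⟩
    · by_cases hv : v = i
      · subst hv
        rw [filter_insert, if_pos he1,
          filter_eq_empty_iff.mpr (fun _ hx => root_no_out hc hdeg _ hx)]
        simp
      · rw [filter_insert, if_neg (fun h => hv (by rw [← h, he1]))]
        exact hdeg v hv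
    · exact ReflTransGen.mono (fun a b hab => mem_insert_of_mem hab) _ _ (tree_reach hc hdeg v)
  have hinsB : ∀ e ∈ E.filter (fun e => e.2 = i), ∀ T ∈ Ti e.1, insert e T ∈ C := by
    intro e he T hT
    obtain ⟨heE, he2⟩ := mem_filter.mp he
    obtain ⟨hTE, hc, hdeg⟩ := hTi_mem.mp hT
    refine hC_mem.mpr ⟨insert_subset heE hTE, fun v => ?_, fun v => ?_⟩
    · by_cases hv : v = e.1
      · subst hv
        rw [filter_insert, if_pos rfl,
          filter_eq_empty_iff.mpr (fun _ hx => root_no_out hc hdeg _ hx)]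
        simp
      · rw [filter_insert, if_neg (fun h => hv h.symm)]
        exact hdeg v hv
    · refine ReflTransGen.tail
        (ReflTransGen.mono (fun a b hab => mem_insert_of_mem hab) _ _ (tree_reach hc hdeg v)) ?_
      have he' : (e.1, i) = e := by rw [← he2]
      rw [he']
      exact mem_insert_self _ _
  have hA : C = (E.filter (fun e => e.1 = i)).biUnion
      (fun e => (Ti i).image (insert e)) := by
    ext F
    constructor
    · intro hF
      obtain ⟨hFE, hdeg, hreach⟩ := hC_mem.mp hF
      obtain ⟨f, hfx⟩ := hsucc F hdeg
      have heF : (i, f i) ∈ F := (hfx i (f i)).mpr rfl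
      refine mem_biUnion.mpr ⟨(i, f i), mem_filter.mpr ⟨hFE heF, rfl⟩,
        mem_image.mpr ⟨F.erase (i, f i), ?_, insert_erase heF⟩⟩
      refine hTi_mem.mpr ⟨(erase_subset _ _).trans hFE, ?_, ?_⟩
      · rintro ⟨v, hcyc⟩
        obtain ⟨l, hl, hlv, hedge⟩ := transGen_iter hfx (erase_subset _ _) hcyc
        obtain ⟨n, hn⟩ := reach_iter hfx (hreach v)
        have ht : f^[n % l] v = i := by rw [← iter_mod hlv, hn]
        have hedge' := hedge (n % l) (Nat.mod_lt _ hl)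
        have h2 : f^[n % l + 1] v = f i := by rw [Function.iterate_succ_apply', ht]
        rw [h2, ht] at hedge'
        exact (Finset.notMem_erase _ _) hedge'
      · intro v hv
        rw [filter_erase, Finset.erase_eq_of_notMem
          (by simp only [mem_filter, not_and]; exact fun _ h => hv h.symm)]
        exact hdeg v
    · intro hF
      obtain ⟨e, he, hFim⟩ := mem_biUnion.mp hF
      obtain ⟨T, hT, rfl⟩ := mem_image.mp hFim
      exact hinsA e he T hT
  have hB : C = (E.filter (fun e => e.2 = i)).biUnion
      (fun e => (Ti e.1).image (insert e)) := by
    ext F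
    constructor
    · intro hF
      obtain ⟨hFE, hdeg, hreach⟩ := hC_mem.mp hF
      obtain ⟨f, hfx⟩ := hsucc F hdeg
      obtain ⟨n, hn⟩ := reach_iter hfx (hreach (f i))
      have hfj : f (f^[n] i) = i := by
        rw [← Function.iterate_succ_apply' f n i, Function.iterate_succ_apply, hn]
      set j := f^[n] i with hj_def
      have heF : (j, i) ∈ F := (hfx j i).mpr hfj.symm
      have hiRj : ∃ p, f^[p] i = j := ⟨n, rfl⟩
      refine mem_biUnion.mpr ⟨(j, i), mem_filter.mpr ⟨hFE heF, rfl⟩,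
        mem_image.mpr ⟨F.erase (j, i), ?_, insert_erase heF⟩⟩
      refine hTi_mem.mpr ⟨(erase_subset _ _).trans hFE, ?_, ?_⟩
      · rintro ⟨v, hcyc⟩
        obtain ⟨l, hl, hlv, hedge⟩ := transGen_iter hfx (erase_subset _ _) hcyc
        obtain ⟨m, hm⟩ := reach_iter hfx (hreach v)
        have ht : f^[m % l] v = i := by rw [← iter_mod hlv, hm]
        have hkey : ∃ s, s < l ∧ f^[s+1] v = i ∧ f^[l-1] i = f^[s] v := by
          rcases Nat.eq_zero_or_pos (m % l) with h0 | hpos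
          · rw [h0] at ht
            simp only [Function.iterate_zero_apply] at ht
            refine ⟨l - 1, by omega, ?_, ?_⟩
            · have hsucc1 : l - 1 + 1 = l := by omega
              rw [hsucc1, hlv, ht]
            · rw [← ht]
          · have hml := Nat.mod_lt m hl
            refine ⟨m % l - 1, by omega, ?_, ?_⟩
            · have hsucc1 : m % l - 1 + 1 = m % l := by omega
              rw [hsucc1, ht]
            · have h1 : f^[l - 1] i = f^[(l-1) + m % l] v := by
                rw [Function.iterate_add_apply, ht]
              have h2 : (l - 1) + m % l = (m % l - 1) + l := by omega
              rw [h1, h2, Function.iterate_add_apply, hlv]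
        obtain ⟨s, hsl, hsv, hsw⟩ := hkey
        have hedge' := hedge s hsl
        rw [hsv] at hedge'
        have hw : f (f^[s] v) = i := by
          rw [← hsv]; exact (Function.iterate_succ_apply' f s v).symm
        have hwj : f^[s] v = j := pred_unique' hw hfj ⟨l - 1, hsw⟩ hiRj
        rw [hwj] at hedge'
        exact (Finset.notMem_erase _ _) hedge'
      · intro v hv
        rw [filter_erase, Finset.erase_eq_of_notMem
          (by simp only [mem_filter, not_and]; exact fun _ h => hv h.symm)]
        exact hdeg v
    · intro hF
      obtain ⟨e, he, hFim⟩ := mem_biUnion.mp hF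
      obtain ⟨T, hT, rfl⟩ := mem_image.mp hFim
      exact hinsB e he T hT
  have hfiltA : ∀ e ∈ E.filter (fun e => e.1 = i), ∀ T ∈ Ti i,
      (insert e T).filter (fun x => x.1 = i) = {e} := by
    intro e he T hT
    obtain ⟨-, he1⟩ := mem_filter.mp he
    obtain ⟨-, hc, hdeg⟩ := hTi_mem.mp hT
    rw [filter_insert, if_pos he1,
      filter_eq_empty_iff.mpr (fun _ hx => root_no_out hc hdeg _ hx)]
    rfl
  have hdisjA : (↑(E.filter (fun e => e.1 = i)) : Set (V × V)).PairwiseDisjoint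
      (fun e => (Ti i).image (insert e)) := by
    intro e1 h1 e2 h2 hne
    simp only [Function.onFun]
    rw [Finset.disjoint_left]
    intro F hF1 hF2
    obtain ⟨T1, hT1, hq1⟩ := mem_image.mp hF1
    obtain ⟨T2, hT2, hq2⟩ := mem_image.mp hF2
    apply hne
    have hfa := hfiltA e1 (Finset.mem_coe.mp h1) T1 hT1
    rw [hq1, ← hq2, hfiltA e2 (Finset.mem_coe.mp h2) T2 hT2] at hfa
    exact (Finset.singleton_inj.mp hfa).symm
  have hdisjB : (↑(E.filter (fun e => e.2 = i)) : Set (V × V)).PairwiseDisjoint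
      (fun e => (Ti e.1).image (insert e)) := by
    intro e1 h1 e2 h2 hne
    simp only [Function.onFun]
    rw [Finset.disjoint_left]
    intro F hF1 hF2
    obtain ⟨T1, hT1, hq1⟩ := mem_image.mp hF1
    obtain ⟨T2, hT2, hq2⟩ := mem_image.mp hF2
    have hFC : F ∈ C := hq1 ▸ hinsB e1 (Finset.mem_coe.mp h1) T1 hT1
    obtain ⟨hFE, hdeg, hreach⟩ := hC_mem.mp hFC
    obtain ⟨f, hfx⟩ := hsucc F hdeg
    obtain ⟨-, he12⟩ := mem_filter.mp (Finset.mem_coe.mp h1)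
    obtain ⟨-, he22⟩ := mem_filter.mp (Finset.mem_coe.mp h2)
    have he1F : e1 ∈ F := by rw [← hq1]; exact mem_insert_self _ _
    have he2F : e2 ∈ F := by rw [← hq2]; exact mem_insert_self _ _
    have hf1 : f e1.1 = i := by
      have hm : (e1.1, i) ∈ F := by rw [← he12]; simpa using he1F
      exact ((hfx _ _).mp hm).symm
    have hf2 : f e2.1 = i := by
      have hm : (e2.1, i) ∈ F := by rw [← he22]; simpa using he2F
      exact ((hfx _ _).mp hm).symm
    have hr1 : ∃ p, f^[p] i = e1.1 := by
      obtain ⟨-, hc, hdeg'⟩ := hTi_mem.mp hT1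
      refine reach_iter hfx (ReflTransGen.mono (fun a b hab => ?_) _ _ (tree_reach hc hdeg' i))
      rw [← hq1]; exact mem_insert_of_mem hab
    have hr2 : ∃ p, f^[p] i = e2.1 := by
      obtain ⟨-, hc, hdeg'⟩ := hTi_mem.mp hT2
      refine reach_iter hfx (ReflTransGen.mono (fun a b hab => ?_) _ _ (tree_reach hc hdeg' i))
      rw [← hq2]; exact mem_insert_of_mem hab
    exact hne (Prod.ext (pred_unique' hf1 hf2 hr1 hr2) (by rw [he12, he22]))
  calc ∑ e ∈ E.filter (fun e => e.2 = i), k e * treeConst E k e.1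
      = ∑ e ∈ E.filter (fun e => e.2 = i),
          ∑ F ∈ (Ti e.1).image (insert e), ∏ x ∈ F, k x := by
        refine sum_congr rfl fun e he => ?_
        have hinj' : ∀ T1 ∈ Ti e.1, ∀ T2 ∈ Ti e.1, insert e T1 = insert e T2 → T1 = T2 := by
          intro T1 h1 T2 h2 heq
          rw [← erase_insert (hnotmem e.1 e rfl T1 h1), heq,
            erase_insert (hnotmem e.1 e rfl T2 h2)]
        rw [Finset.sum_image hinj', hKi, mul_sum]
        exact sum_congr rfl fun T hT => (prod_insert (hnotmem e.1 e rfl T hT)).symm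
    _ = ∑ F ∈ C, ∏ x ∈ F, k x := by rw [hB, sum_biUnion hdisjB]
    _ = ∑ e ∈ E.filter (fun e => e.1 = i),
          ∑ F ∈ (Ti i).image (insert e), ∏ x ∈ F, k x := by
        rw [hA, sum_biUnion hdisjA]
    _ = (∑ e ∈ E.filter (fun e => e.1 = i), k e) * treeConst E k i := by
        rw [sum_mul]
        refine sum_congr rfl fun e he => ?_
        have he1 : e.1 = i := (mem_filter.mp he).2
        have hinj' : ∀ T1 ∈ Ti i, ∀ T2 ∈ Ti i, insert e T1 = insert e T2 → T1 = T2 := by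
          intro T1 h1 T2 h2 heq
          rw [← erase_insert (hnotmem i e he1 T1 h1), heq,
            erase_insert (hnotmem i e he1 T2 h2)]
        rw [Finset.sum_image hinj', hKi, mul_sum]
        exact sum_congr rfl fun T hT => prod_insert (hnotmem i e he1 T hT)

lemma lap_row (E : Finset (V × V)) (hloop : NoSelfLoops E) (k : V × V → ℝ)
    (z : V → ℝ) (i : V) :
    (dLaplacian E k).mulVec z i
      = (∑ e ∈ E.filter (fun e => e.2 = i), k e * z e.1)
        - (∑ e ∈ E.filter (fun e => e.1 = i), k e) * z i := by
  simp only [Matrix.mulVec, dotProduct, dLaplacian, Matrix.of_apply]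
  rw [← Finset.sum_erase_add _ _ (mem_univ i), if_pos rfl]
  have h1 : ∑ j ∈ univ.erase i, (if i = j then -(∑ e ∈ E.filter (fun e => e.1 = i), k e)
      else if (j, i) ∈ E then k (j, i) else 0) * z j
      = ∑ j ∈ univ.erase i, (if (j, i) ∈ E then k (j, i) * z j else 0) := by
    refine sum_congr rfl fun j hj => ?_
    rw [if_neg (fun h => (mem_erase.mp hj).1 h.symm)]
    split_ifs <;> ring
  rw [h1, ← Finset.sum_filter]
  have h2 : ∑ j ∈ (univ.erase i).filter (fun j => (j, i) ∈ E), k (j, i) * z j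
      = ∑ e ∈ E.filter (fun e => e.2 = i), k e * z e.1 := by
    refine Finset.sum_bij (fun j _ => (j, i)) ?_ ?_ ?_ ?_
    · intro j hj
      exact mem_filter.mpr ⟨(mem_filter.mp hj).2, rfl⟩
    · intro a _ b _ h
      exact (Prod.ext_iff.mp h).1
    · intro e he
      obtain ⟨heE, he2⟩ := mem_filter.mp he
      refine ⟨e.1, ?_, ?_⟩
      · refine mem_filter.mpr ⟨mem_erase.mpr ⟨fun h => hloop e heE (by rw [h, he2]),
          mem_univ _⟩, ?_⟩
        have he' : (e.1, i) = e := by rw [← he2]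
        rw [he']; exact heE
      · show (e.1, i) = e
        exact Prod.ext rfl he2.symm
    · intro j hj; rfl
  rw [h2]
  ring


/-- For a strongly connected labeled simple digraph, the vector of tree constants is
componentwise positive, satisfies `A_k K_k = 0`, and spans the kernel of `A_k`. -/
theorem tree_constants_span_kernel
    {V : Type*} [Fintype V] [DecidableEq V]
    (E : Finset (V × V)) (hloop : NoSelfLoops E)
    (k : V × V → ℝ) (hk : ∀ e ∈ E, 0 < k e)
    (hsc : StronglyConnected E) :
    (∀ i : V, 0 < treeConst E k i) ∧
    (dLaplacian E k).mulVec (treeConst E k) = 0 ∧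
    LinearMap.ker (dLaplacian E k).mulVecLin = Submodule.span ℝ {treeConst E k} := by
  classical
  have hpos : ∀ i : V, 0 < treeConst E k i := by
    intro i
    obtain ⟨T, hT⟩ := exists_tree E hsc i
    unfold treeConst
    refine Finset.sum_pos ?_ ⟨T, mem_filter.mpr ⟨mem_powerset.mpr hT.1, hT⟩⟩
    intro T' hT'
    obtain ⟨hT'E, -⟩ := mem_filter.mp hT'
    exact Finset.prod_pos fun e he => hk e (mem_powerset.mp hT'E he)
  have hKy0 : ∀ v, treeConst E k v ≠ 0 := fun v => (hpos v).ne'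
  have hker : (dLaplacian E k).mulVec (treeConst E k) = 0 := by
    funext i
    rw [Pi.zero_apply, lap_row E hloop k _ i, row_identity E hloop k i, sub_self]
  refine ⟨hpos, hker, ?_⟩
  apply le_antisymm
  · intro x hx
    rw [LinearMap.mem_ker, Matrix.mulVecLin_apply] at hx
    rw [Submodule.mem_span_singleton]
    cases isEmpty_or_nonempty V with
    | inl h => exact ⟨0, by ext v; exact isEmptyElim v⟩
    | inr h =>
      set y : V → ℝ := fun v => x v / treeConst E k v with hy
      have hKy : ∀ v, treeConst E k v * y v = x v := by
        intro v
        simp only [hy]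
        rw [mul_comm, div_mul_cancel₀ (x v) (hKy0 v)]
      obtain ⟨v0, -, hmax⟩ := Finset.exists_max_image univ y univ_nonempty
      set M := y v0 with hM
      have hmax' : ∀ v : V, y v ≤ M := fun v => hmax v (mem_univ v)
      have hstep : ∀ a b : V, (a, b) ∈ E → y b = M → y a = M := by
        intro a b hab hyb
        have hxz : ∑ e ∈ E.filter (fun e => e.2 = b), k e * x e.1
            = (∑ e ∈ E.filter (fun e => e.1 = b), k e) * x b := by
          have h0 := congrFun hx b
          rw [Pi.zero_apply, lap_row E hloop k x b, sub_eq_zero] at h0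
          exact h0
        have hKz := row_identity E hloop k b
        have hzero : ∑ e ∈ E.filter (fun e => e.2 = b),
            k e * treeConst E k e.1 * (M - y e.1) = 0 := by
          have hexp : ∀ e ∈ E.filter (fun e => e.2 = b),
              k e * treeConst E k e.1 * (M - y e.1)
                = M * (k e * treeConst E k e.1) - k e * x e.1 := by
            intro e he
            rw [← hKy e.1]
            ring
          rw [Finset.sum_congr rfl hexp, Finset.sum_sub_distrib, ← Finset.mul_sum, hKz, hxz,
            ← hKy b, hyb]
          ring
        have hnn : ∀ e ∈ E.filter (fun e => e.2 = b),
            0 ≤ k e * treeConst E k e.1 * (M - y e.1) := by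
          intro e he
          exact mul_nonneg (mul_nonneg (hk e (mem_filter.mp he).1).le (hpos e.1).le)
            (sub_nonneg.mpr (hmax' e.1))
        have hterm := (Finset.sum_eq_zero_iff_of_nonneg hnn).mp hzero (a, b)
          (mem_filter.mpr ⟨hab, rfl⟩)
        rcases mul_eq_zero.mp hterm with h' | h'
        · exact absurd h' (mul_ne_zero (hk (a, b) hab).ne' (hKy0 a))
        · linarith [sub_eq_zero.mp h']
      have hall : ∀ a : V, y a = M := by
        intro a
        have hr : ReflTransGen (fun a b => (a, b) ∈ E) a v0 := hsc a v0
        induction hr using ReflTransGen.head_induction_on with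
        | refl => rfl
        | head h' _ ih => exact hstep _ _ h' ih
      refine ⟨M, funext fun v => ?_⟩
      rw [Pi.smul_apply, smul_eq_mul, ← hKy v, hall v]
      ring
  · rw [Submodule.span_le, Set.singleton_subset_iff]
    refine LinearMap.mem_ker.mpr ?_
    rw [Matrix.mulVecLin_apply]
    exact hker
end Aux
end

section
/- (Proposition 1) Let G_k=(V,E,k) be a strongly connected labeled simple digraph and G_ℰ=(V,ℰ) an auxiliary digraph (a directed tree on V). Then there exists a unique matrix 𝒜_{k,ℰ} ∈ ℝ^{ℰ×ℰ} (the core matrix of the graph Laplacian) such that A_k diag(K_k) = −I_ℰ 𝒜_{k,ℰ} I_ℰ^T, and this matrix 𝒜_{k,ℰ} is invertible. -/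
open Matrix BigOperators Finset

variable {V : Type*}

/-- The digraphLaplacian matrix `A_k` of the labeled digraph `(V, F, k)`:
`(A_k)_{i,j} = k_{j→i}` if `(j→i) ∈ F`, `(A_k)_{i,i} = -∑_{(i→j)∈F} k_{i→j}`, and `0` otherwise. -/
noncomputable def digraphLaplacian [Fintype V] [DecidableEq V]
    (F : Finset (V × V)) (k : V × V → ℝ) : Matrix V V ℝ :=
  Matrix.of fun i j =>
    if i = j then -(∑ e ∈ F.filter (fun e => e.1 = i), k e)
    else if (j, i) ∈ F then k (j, i) else 0

/-- An auxiliary digraph on the vertex set `V` is a directed tree: it has `|V| - 1` edges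
and its underlying undirected graph is connected. -/
def IsDirectedTree {V : Type*} [Fintype V] (F : Finset (V × V)) : Prop :=
  F.card = Fintype.card V - 1 ∧ ∀ i j : V, uReach F i j

section Walks

/-- walking along iterates of a successor function -/
lemma iter_path (S : Finset (V × V)) (f : V → V) :
    ∀ (t : ℕ) (v : V), (∀ s < t, (f^[s] v, f^[s+1] v) ∈ S) →
      Relation.ReflTransGen (fun a b => (a, b) ∈ S) v (f^[t] v) := by
  intro t
  induction t with
  | zero => intro v _; exact Relation.ReflTransGen.refl
  | succ t ih =>
    intro v h
    refine (ih v fun s hs => h s (Nat.lt_succ_of_lt hs)).tail ?_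
    exact h t (Nat.lt_succ_self t)

lemma iter_cycle {S : Finset (V × V)} {f : V → V} {c : V} {p : ℕ} (hp : 1 ≤ p)
    (h : ∀ s < p, (f^[s] c, f^[s+1] c) ∈ S) (hc : f^[p] c = c) :
    Relation.TransGen (fun a b => (a, b) ∈ S) c c := by
  have h0 : (c, f c) ∈ S := by simpa using h 0 hp
  refine Relation.TransGen.head' h0 ?_
  have hpath := iter_path S f (p-1) (f c) (fun s hs => by
    have := h (s+1) (by omega)
    simpa [Function.iterate_succ_apply] using this)
  have : f^[p-1] (f c) = c := by
    rw [← Function.iterate_succ_apply f (p-1) c]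
    rw [Nat.succ_eq_add_one, Nat.sub_add_cancel hp]
    exact hc
  rwa [this] at hpath

lemma exists_period [Finite V] (g : V → V) (v : V) :
    ∃ a p, 1 ≤ p ∧ g^[p] (g^[a] v) = g^[a] v := by
  obtain ⟨a, b, hne, he⟩ := Finite.exists_ne_map_eq_of_infinite (fun t : ℕ => g^[t] v)
  rcases hne.lt_or_gt with hab | hab
  · refine ⟨a, b - a, by omega, ?_⟩
    rw [← Function.iterate_add_apply, Nat.sub_add_cancel hab.le]
    exact he.symm
  · refine ⟨b, a - b, by omega, ?_⟩
    rw [← Function.iterate_add_apply, Nat.sub_add_cancel hab.le]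
    exact he

lemma cycle_of_succ [Finite V] (S : Finset (V × V)) (f : V → V)
    (hf : ∀ v, (v, f v) ∈ S) (v0 : V) : HasDirectedCycle S := by
  obtain ⟨a, p, hp, hc⟩ := exists_period f v0
  exact ⟨f^[a] v0, iter_cycle hp (fun s _ => by
    rw [Function.iterate_succ_apply']; exact hf _) hc⟩

/-- no cycle if the graph is functional, has a sink `i`, and everything reaches `i` -/
lemma noCycle_of_reach_sink (T : Finset (V × V)) (i : V)
    (hfun : ∀ a b c : V, (a, b) ∈ T → (a, c) ∈ T → b = c)
    (hi : ∀ b, (i, b) ∉ T) :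
    ∀ v, dReach T v i → ¬ Relation.TransGen (fun a b => (a, b) ∈ T) v v := by
  intro v h
  induction h using Relation.ReflTransGen.head_induction_on with
  | refl =>
    intro hc
    obtain ⟨b, hb, -⟩ := Relation.TransGen.head'_iff.mp hc
    exact hi b hb
  | @head a c h' hrest ih =>
    intro hc
    obtain ⟨u, hu, hua⟩ := Relation.TransGen.head'_iff.mp hc
    have huc : u = c := hfun a u c hu h'
    subst huc
    rcases Relation.ReflTransGen.cases_head hua with hca | ⟨w, hw, hwa⟩
    · exact ih (by rw [hca]; exact hc)
    · exact ih (Relation.TransGen.head' hw (hwa.tail h'))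

lemma rtg_sink {R : Finset (V × V)} {b : V} (hb : ∀ c, (b, c) ∉ R) {y : V}
    (h : Relation.ReflTransGen (fun p q => (p, q) ∈ R) b y) : y = b := by
  rcases Relation.ReflTransGen.cases_head h with h1 | ⟨c, hc, -⟩
  · exact h1.symm
  · exact absurd hc (hb c)

lemma rtg_insert [DecidableEq V] {R : Finset (V × V)} {a b x y : V}
    (hb : ∀ c, (b, c) ∉ insert (a, b) R)
    (h : Relation.ReflTransGen (fun p q => (p, q) ∈ insert (a, b) R) x y) :
    Relation.ReflTransGen (fun p q => (p, q) ∈ R) x y ∨ y = b := by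
  induction h with
  | refl => exact Or.inl Relation.ReflTransGen.refl
  | @tail z w hxz hzw ih =>
    rcases ih with ih | rfl
    · rcases Finset.mem_insert.mp hzw with he | hR
      · right; exact congrArg Prod.snd he
      · left; exact ih.tail hR
    · exact absurd hzw (hb _)

lemma noCycle_insert [DecidableEq V] {R : Finset (V × V)} {a b : V}
    (hb : ∀ c, (b, c) ∉ insert (a, b) R) (hR : ¬ HasDirectedCycle R) :
    ¬ HasDirectedCycle (insert (a, b) R) := by
  rintro ⟨v, hv⟩
  obtain ⟨w, hw, hwv⟩ := Relation.TransGen.head'_iff.mp hv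
  rcases rtg_insert hb hwv with hwvR | rfl
  · rcases Finset.mem_insert.mp hw with he | hR'
    · have hwb : w = b := congrArg Prod.snd he
      have hRsub : ∀ c, (w, c) ∉ R := by
        intro c hc; rw [hwb] at hc; exact hb c (Finset.mem_insert_of_mem hc)
      have hvw : v = w := rtg_sink hRsub hwvR
      rw [hvw, hwb] at hw
      exact hb b hw
    · exact hR ⟨v, Relation.TransGen.head' hR' hwvR⟩
  · exact hb w hw

lemma cycle_mono {R T : Finset (V × V)} (h : R ⊆ T) :
    HasDirectedCycle R → HasDirectedCycle T := by
  rintro ⟨v, hv⟩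
  exact ⟨v, Relation.TransGen.mono (fun a b hab => h hab) v v hv⟩

end Walks

section TreeExist

variable [Fintype V] [DecidableEq V]

lemma exists_boundary (E : Finset (V × V)) (C : Finset V) :
    ∀ v w : V, dReach E v w → v ∉ C → w ∈ C → ∃ a b : V, (a, b) ∈ E ∧ a ∉ C ∧ b ∈ C := by
  intro v w h
  induction h using Relation.ReflTransGen.head_induction_on with
  | refl => intro hv hw; exact absurd hw hv
  | @head a c h' _ ih =>
    intro hv hw
    by_cases hc : c ∈ C
    · exact ⟨a, c, h', hv, hc⟩
    · exact ih hc hw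

lemma exists_spanning_tree (E : Finset (V × V)) (hsc : StronglyConnected E) (i : V) :
    ∃ T, IsSpanningTreeTo E i T := by
  -- invariant
  set Inv : Finset V → Finset (V × V) → Prop := fun C T =>
    i ∈ C ∧ T ⊆ E ∧ (∀ e ∈ T, e.1 ∈ C ∧ e.1 ≠ i ∧ e.2 ∈ C) ∧
      (∀ j ∈ C, j ≠ i → (T.filter (fun e => e.1 = j)).card = 1) ∧
      (∀ j, j ∉ C → (T.filter (fun e => e.1 = j)) = ∅) ∧
      (∀ j ∈ C, dReach T j i) with hInv
  suffices h : ∀ (m : ℕ) (C : Finset V) (T : Finset (V × V)),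
      (Finset.univ \ C).card ≤ m → Inv C T → ∃ T', Inv Finset.univ T' by
    obtain ⟨T', hT'⟩ := h (Finset.univ \ {i}).card {i} ∅ le_rfl
      ⟨Finset.mem_singleton_self i, empty_subset _,
        fun e he => absurd he (Finset.notMem_empty e),
        fun j hj hji => absurd (Finset.mem_singleton.mp hj) hji,
        fun j _ => Finset.filter_empty _,
        fun j hj => by rw [Finset.mem_singleton.mp hj]; exact Relation.ReflTransGen.refl⟩
    refine ⟨T', hT'.2.1, ?_, fun j hj => hT'.2.2.2.1 j (Finset.mem_univ j) hj⟩
    rintro hcyc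
    obtain ⟨v, hv⟩ := hcyc
    refine noCycle_of_reach_sink T' i ?_ ?_ v (hT'.2.2.2.2.2 v (Finset.mem_univ v)) hv
    · intro a b c hab hac
      have ha : a ≠ i := (hT'.2.2.1 _ hab).2.1
      have hcard := hT'.2.2.2.1 a (Finset.mem_univ a) ha
      obtain ⟨e, he⟩ := Finset.card_eq_one.mp hcard
      have h1 : (a, b) ∈ T'.filter (fun e => e.1 = a) := Finset.mem_filter.mpr ⟨hab, rfl⟩
      have h2 : (a, c) ∈ T'.filter (fun e => e.1 = a) := Finset.mem_filter.mpr ⟨hac, rfl⟩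
      rw [he, Finset.mem_singleton] at h1 h2
      have := h1.trans h2.symm
      exact congrArg Prod.snd this
    · intro b hb
      exact (hT'.2.2.1 _ hb).2.1 rfl
  intro m
  induction m with
  | zero =>
    intro C T hm hinv
    have : Finset.univ \ C = ∅ := Finset.card_eq_zero.mp (Nat.le_zero.mp hm)
    have hC : C = Finset.univ := by
      ext x
      simp only [Finset.mem_univ, iff_true]
      by_contra hx
      have : x ∈ Finset.univ \ C := Finset.mem_sdiff.mpr ⟨Finset.mem_univ x, hx⟩
      simp [‹Finset.univ \ C = ∅›] at this
    exact ⟨T, hC ▸ hinv⟩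
  | succ m ih =>
    intro C T hm hinv
    by_cases hC : C = Finset.univ
    · exact ⟨T, hC ▸ hinv⟩
    · -- pick v ∉ C encoding
      have : ∃ v, v ∉ C := by
        by_contra h
        push_neg at h
        exact hC (Finset.eq_univ_iff_forall.mpr h)
      obtain ⟨v, hv⟩ := this
      obtain ⟨a, b, hab, haC, hbC⟩ := exists_boundary E C v i (hsc v i) hv hinv.1
      have hanoti : a ≠ i := fun h => haC (h ▸ hinv.1)
      have hTa : T.filter (fun e => e.1 = a) = ∅ := hinv.2.2.2.2.1 a haC
      refine ih (insert a C) (insert (a, b) T) ?_ ?_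
      · have : (Finset.univ \ insert a C).card < (Finset.univ \ C).card := by
          apply Finset.card_lt_card
          constructor
          · intro x hx
            rw [Finset.mem_sdiff] at hx ⊢
            exact ⟨hx.1, fun h => hx.2 (Finset.mem_insert_of_mem h)⟩
          · intro hsub
            have : a ∈ Finset.univ \ C := Finset.mem_sdiff.mpr ⟨Finset.mem_univ a, haC⟩
            have := hsub this
            rw [Finset.mem_sdiff] at this
            exact this.2 (Finset.mem_insert_self a C)
        omega
      · refine ⟨Finset.mem_insert_of_mem hinv.1, ?_, ?_, ?_, ?_, ?_⟩
        · exact Finset.insert_subset hab hinv.2.1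
        · intro e he
          rcases Finset.mem_insert.mp he with rfl | he'
          · exact ⟨Finset.mem_insert_self a C, hanoti, Finset.mem_insert_of_mem hbC⟩
          · obtain ⟨h1, h2, h3⟩ := hinv.2.2.1 e he'
            exact ⟨Finset.mem_insert_of_mem h1, h2, Finset.mem_insert_of_mem h3⟩
        · intro j hj hji
          rw [Finset.filter_insert]
          rcases Finset.mem_insert.mp hj with rfl | hjC
          · simp only [if_pos rfl]
            rw [hTa]
            simp
          · have hja : a ≠ j := fun h => haC (h ▸ hjC)
            rw [if_neg hja]
            exact hinv.2.2.2.1 j hjC hji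
        · intro j hj
          have hja : a ≠ j := fun h => hj (h ▸ Finset.mem_insert_self a C)
          have hjC : j ∉ C := fun h => hj (Finset.mem_insert_of_mem h)
          rw [Finset.filter_insert, if_neg hja]
          exact hinv.2.2.2.2.1 j hjC
        · intro j hj
          have hmono : ∀ x y : V, dReach T x y → dReach (insert (a,b) T) x y := by
            intro x y hxy
            exact Relation.ReflTransGen.mono (fun p q hpq => Finset.mem_insert_of_mem hpq) x y hxy
          rcases Finset.mem_insert.mp hj with rfl | hjC
          · exact Relation.ReflTransGen.head (Finset.mem_insert_self _ _)
              (hmono b i (hinv.2.2.2.2.2 b hbC))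
          · exact hmono j i (hinv.2.2.2.2.2 j hjC)

end TreeExist
section Succ

variable [DecidableEq V]

open Classical in
noncomputable def succOf (S : Finset (V × V)) (v : V) : V :=
  if h : ∃ w, (v, w) ∈ S then h.choose else v

lemma succOf_mem {S : Finset (V × V)} {v : V} (h : ∃ w, (v, w) ∈ S) :
    (v, succOf S v) ∈ S := by
  rw [succOf, dif_pos h]; exact h.choose_spec

lemma out_unique {S : Finset (V × V)} {v : V}
    (hcard : (S.filter (fun e => e.1 = v)).card = 1) :
    ∀ b c, (v, b) ∈ S → (v, c) ∈ S → b = c := by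
  intro b c hb hc
  obtain ⟨e, he⟩ := Finset.card_eq_one.mp hcard
  have h1 : (v, b) ∈ S.filter (fun e => e.1 = v) := Finset.mem_filter.mpr ⟨hb, rfl⟩
  have h2 : (v, c) ∈ S.filter (fun e => e.1 = v) := Finset.mem_filter.mpr ⟨hc, rfl⟩
  rw [he, Finset.mem_singleton] at h1 h2
  exact congrArg Prod.snd (h1.trans h2.symm)

lemma card_one_exists_out {S : Finset (V × V)} {v : V}
    (hcard : (S.filter (fun e => e.1 = v)).card = 1) : ∃ w, (v, w) ∈ S := by
  obtain ⟨e, he⟩ := Finset.card_eq_one.mp hcard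
  have : e ∈ S.filter (fun e => e.1 = v) := he ▸ Finset.mem_singleton_self e
  rw [Finset.mem_filter] at this
  exact ⟨e.2, by rw [← this.2, Prod.mk.eta]; exact this.1⟩

lemma rtg_orbit {S T : Finset (V × V)} {f : V → V}
    (huniq : ∀ v w, (v, w) ∈ S → w = f v) (hsub : T ⊆ S) {x y : V}
    (h : Relation.ReflTransGen (fun a b => (a, b) ∈ T) x y) : ∃ t, f^[t] x = y := by
  induction h with
  | refl => exact ⟨0, rfl⟩
  | @tail z w hxz hzw ih =>
    obtain ⟨t, ht⟩ := ih
    exact ⟨t + 1, by rw [Function.iterate_succ_apply', ht]; exact (huniq z w (hsub hzw)).symm⟩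

lemma pred_canonical (f : V → V) {i : V} {m m' : ℕ} (hm : 1 ≤ m) (hm' : 1 ≤ m')
    (h : f^[m] i = i) (h' : f^[m'] i = i)
    (hmin : ∀ s, 1 ≤ s → s < m → f^[s] i ≠ i) :
    f^[m' - 1] i = f^[m - 1] i := by
  have hqm : ∀ q, f^[m * q] i = i := by
    intro q
    induction q with
    | zero => simp
    | succ q ih =>
      rw [Nat.mul_succ, Function.iterate_add_apply, h]
      exact ih
  have hmr : m' % m + m * (m' / m) = m' := Nat.mod_add_div m' m
  have hril : m' % m < m := Nat.mod_lt m' (by omega)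
  have hfr : f^[m' % m] i = i := by
    have h2 : f^[m' % m + m * (m' / m)] i = i := by rw [hmr]; exact h'
    rwa [Function.iterate_add_apply, hqm (m' / m)] at h2
  have hr0 : m' % m = 0 := by
    by_contra hne
    exact hmin _ (by omega) hril hfr
  obtain ⟨q', hq'⟩ : ∃ q', m' / m = q' + 1 := by
    refine ⟨m' / m - 1, ?_⟩
    have hne : m' / m ≠ 0 := by
      intro h0
      rw [h0, Nat.mul_zero] at hmr
      omega
    exact (Nat.succ_pred_eq_of_pos (Nat.pos_of_ne_zero hne)).symm
  have hsplit : m' - 1 = (m - 1) + m * q' := by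
    have h3 : m' = m * q' + m := by
      have h4 := hmr
      rw [hq', Nat.mul_succ] at h4
      omega
    omega
  rw [hsplit, Function.iterate_add_apply, hqm q']

end Succ

section Trees

variable [Fintype V] [DecidableEq V]

open scoped Classical in
noncomputable def Trees (E : Finset (V × V)) (i : V) : Finset (Finset (V × V)) :=
  E.powerset.filter (fun T => IsSpanningTreeTo E i T)

lemma treeConst_eq (E : Finset (V × V)) (k : V × V → ℝ) (i : V) :
    treeConst E k i = ∑ T ∈ Trees E i, ∏ e ∈ T, k e := rfl

lemma mem_Trees {E : Finset (V × V)} {i : V} {T : Finset (V × V)} :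
    T ∈ Trees E i ↔ IsSpanningTreeTo E i T := by
  unfold Trees
  simp only [Finset.mem_filter, Finset.mem_powerset]
  exact ⟨fun h => h.2, fun h => ⟨h.1, h⟩⟩

lemma root_no_out_s2 {E T : Finset (V × V)} {i : V} (hT : IsSpanningTreeTo E i T) :
    ∀ b, (i, b) ∉ T := by
  intro b hb
  have hex : ∀ v, ∃ w, (v, w) ∈ T := by
    intro v
    by_cases hv : v = i
    · exact ⟨b, hv ▸ hb⟩
    · exact card_one_exists_out (hT.2.2 v hv)
  exact hT.2.1 (cycle_of_succ T (fun v => (hex v).choose) (fun v => (hex v).choose_spec) i)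

lemma tree_reach_s2 {E T : Finset (V × V)} {r : V}
    (hT : IsSpanningTreeTo E r T) (v : V) : dReach T v r := by
  set g := succOf T with hg
  have hgmem : ∀ w, w ≠ r → (w, g w) ∈ T := by
    intro w hw
    exact succOf_mem (card_one_exists_out (hT.2.2 w hw))
  have hhit : ∀ w, ∃ t, g^[t] w = r := by
    intro w
    obtain ⟨a, p, hp, hc⟩ := exists_period g w
    set c := g^[a] w with hcdef
    by_cases hr : ∃ s, s < p ∧ g^[s] c = r
    · obtain ⟨s, _, hs⟩ := hr
      exact ⟨a + s, by rw [Nat.add_comm, Function.iterate_add_apply]; exact hs⟩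
    · push_neg at hr
      exfalso
      exact hT.2.1 ⟨c, iter_cycle hp (fun s hs => by
        rw [Function.iterate_succ_apply']
        exact hgmem _ (hr s hs)) hc⟩
  have hPex : ∃ t, g^[t] v = r := hhit v
  have hPmin := Nat.find_spec hPex
  have hpath := iter_path T g (Nat.find hPex) v (fun s hs => by
    rw [Function.iterate_succ_apply']
    exact hgmem _ (Nat.find_min hPex hs))
  show Relation.ReflTransGen _ v r
  rwa [hPmin] at hpath

lemma treeConst_pos {E : Finset (V × V)} {k : V × V → ℝ} (hk : ∀ e ∈ E, 0 < k e)
    (hsc : StronglyConnected E) (i : V) : 0 < treeConst E k i := by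
  rw [treeConst_eq]
  obtain ⟨T, hT⟩ := exists_spanning_tree E hsc i
  apply Finset.sum_pos
  · intro T' hT'
    exact Finset.prod_pos fun e he => hk e ((mem_Trees.mp hT').1 he)
  · exact ⟨T, mem_Trees.mpr hT⟩

end Trees

section FunGraphs

variable [Fintype V] [DecidableEq V]

open scoped Classical in
noncomputable def FunGraphs (E : Finset (V × V)) (i : V) : Finset (Finset (V × V)) :=
  E.powerset.filter (fun S => (∀ v, (S.filter (fun e => e.1 = v)).card = 1) ∧
    ¬ HasDirectedCycle (S.filter (fun e => e.1 ≠ i)))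

lemma mem_FunGraphs {E : Finset (V × V)} {i : V} {S : Finset (V × V)} :
    S ∈ FunGraphs E i ↔ S ⊆ E ∧ (∀ v, (S.filter (fun e => e.1 = v)).card = 1) ∧
      ¬ HasDirectedCycle (S.filter (fun e => e.1 ≠ i)) := by
  unfold FunGraphs
  simp only [Finset.mem_filter, Finset.mem_powerset, and_assoc]

lemma filter_eq_root_empty {T : Finset (V × V)} {r : V} (hroot : ∀ b, (r, b) ∉ T) :
    T.filter (fun x => x.1 = r) = ∅ := by
  rw [Finset.filter_eq_empty_iff]
  intro x hx hxr
  exact hroot x.2 (by rw [← hxr, Prod.mk.eta]; exact hx)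

lemma insert_filter_eq_root {T : Finset (V × V)} {r : V} (hroot : ∀ b, (r, b) ∉ T)
    (e : V × V) (he1 : e.1 = r) :
    (insert e T).filter (fun x => x.1 = r) = {e} := by
  rw [Finset.filter_insert, if_pos he1, filter_eq_root_empty hroot]
  simp

lemma insert_filter_card {E T : Finset (V × V)} {r : V}
    (hT : IsSpanningTreeTo E r T) (e : V × V) (he1 : e.1 = r) :
    ∀ v, ((insert e T).filter (fun x => x.1 = v)).card = 1 := by
  intro v
  by_cases hv : v = r
  · subst hv
    rw [insert_filter_eq_root (root_no_out_s2 hT) e he1]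
    simp
  · rw [Finset.filter_insert, if_neg (fun h => hv (h.symm.trans he1))]
    exact hT.2.2 v hv

lemma insert_filter_ne {T : Finset (V × V)} {r : V} (hroot : ∀ b, (r, b) ∉ T)
    (e : V × V) (he1 : e.1 = r) :
    (insert e T).filter (fun x => x.1 ≠ r) = T.filter (fun x => x.1 ≠ r) := by
  rw [Finset.filter_insert, if_neg (by simp [he1])]

lemma tree_filter_ne_self {E T : Finset (V × V)} {r : V} (hT : IsSpanningTreeTo E r T) :
    T.filter (fun x => x.1 ≠ r) = T := by
  apply Finset.filter_true_of_mem
  intro x hx hxr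
  exact root_no_out_s2 hT x.2 (by rw [← hxr, Prod.mk.eta]; exact hx)

/-- Identity 1: the out-flow at `i` times the tree constant. -/
lemma markov_left {E : Finset (V × V)} (hloop : NoSelfLoops E) (k : V × V → ℝ) (i : V) :
    ∑ e ∈ E.filter (fun e => e.1 = i), (k e * treeConst E k i)
      = ∑ S ∈ FunGraphs E i, ∏ e ∈ S, k e := by
  have h1 : ∑ e ∈ E.filter (fun e => e.1 = i), (k e * treeConst E k i)
      = ∑ p ∈ (E.filter (fun e => e.1 = i)) ×ˢ Trees E i, (k p.1 * ∏ e ∈ p.2, k e) := by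
    rw [Finset.sum_product]
    refine Finset.sum_congr rfl fun e he => ?_
    rw [treeConst_eq, Finset.mul_sum]
  rw [h1]
  refine Finset.sum_bij (fun p _ => insert p.1 p.2) ?_ ?_ ?_ ?_
  · -- membership
    rintro ⟨e, T⟩ hp
    rw [Finset.mem_product, Finset.mem_filter] at hp
    obtain ⟨⟨heE, he1⟩, hT⟩ := hp
    rw [mem_Trees] at hT
    dsimp only at *
    rw [mem_FunGraphs]
    refine ⟨Finset.insert_subset heE hT.1, insert_filter_card hT e he1, ?_⟩
    rw [insert_filter_ne (root_no_out_s2 hT) e he1, tree_filter_ne_self hT]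
    exact hT.2.1
  · -- injectivity
    rintro ⟨e₁, T₁⟩ hp₁ ⟨e₂, T₂⟩ hp₂ heq
    rw [Finset.mem_product, Finset.mem_filter] at hp₁ hp₂
    obtain ⟨⟨he₁E, he₁1⟩, hT₁⟩ := hp₁
    obtain ⟨⟨he₂E, he₂1⟩, hT₂⟩ := hp₂
    rw [mem_Trees] at hT₁ hT₂
    dsimp only at *
    have hfe : ({e₁} : Finset (V × V)) = {e₂} := by
      rw [← insert_filter_eq_root (root_no_out_s2 hT₁) e₁ he₁1,
          ← insert_filter_eq_root (root_no_out_s2 hT₂) e₂ he₂1, heq]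
    have he : e₁ = e₂ := Finset.singleton_inj.mp hfe
    have hTT : T₁ = T₂ := by
      have h1 := insert_filter_ne (root_no_out_s2 hT₁) e₁ he₁1
      have h2 := insert_filter_ne (root_no_out_s2 hT₂) e₂ he₂1
      rw [tree_filter_ne_self hT₁] at h1
      rw [tree_filter_ne_self hT₂] at h2
      rw [← h1, ← h2, heq]
    rw [Prod.mk.injEq]
    exact ⟨he, hTT⟩
  · -- surjectivity
    intro S hS
    rw [mem_FunGraphs] at hS
    obtain ⟨hSE, hcard, hcyc⟩ := hS
    obtain ⟨e, he⟩ := Finset.card_eq_one.mp (hcard i)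
    have heS : e ∈ S ∧ e.1 = i := by
      have : e ∈ S.filter (fun x => x.1 = i) := he ▸ Finset.mem_singleton_self e
      rw [Finset.mem_filter] at this
      exact this
    refine ⟨(e, S.filter (fun x => x.1 ≠ i)), ?_, ?_⟩
    · rw [Finset.mem_product, Finset.mem_filter, mem_Trees]
      refine ⟨⟨hSE heS.1, heS.2⟩, (Finset.filter_subset _ _).trans hSE, hcyc, ?_⟩
      intro j hj
      rw [Finset.filter_filter]
      have : S.filter (fun a => a.1 ≠ i ∧ a.1 = j) = S.filter (fun a => a.1 = j) := by
        apply Finset.filter_congr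
        intro x hx
        constructor
        · exact fun h => h.2
        · exact fun h => ⟨by rw [h]; exact hj, h⟩
      rw [this]
      exact hcard j
    · -- S = insert e (filter ...)
      ext x
      simp only [Finset.mem_insert, Finset.mem_filter]
      constructor
      · rintro (rfl | ⟨hxS, -⟩)
        · exact heS.1
        · exact hxS
      · intro hx
        by_cases hxi : x.1 = i
        · left
          have hmem : x ∈ S.filter (fun y => y.1 = i) := Finset.mem_filter.mpr ⟨hx, hxi⟩
          rw [he, Finset.mem_singleton] at hmem
          exact hmem
        · right; exact ⟨hx, hxi⟩
  · -- values
    rintro ⟨e, T⟩ hp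
    rw [Finset.mem_product, Finset.mem_filter] at hp
    obtain ⟨⟨heE, he1⟩, hT⟩ := hp
    rw [mem_Trees] at hT
    dsimp only at *
    have hnot : e ∉ T := fun heT => root_no_out_s2 hT e.2 (by rw [← he1, Prod.mk.eta]; exact heT)
    rw [Finset.prod_insert hnot]

end FunGraphs
section MarkovRight

variable [Fintype V] [DecidableEq V]

lemma funGraphs_succ {E S : Finset (V × V)} {i : V} (hS : S ∈ FunGraphs E i) :
    (∀ v, (v, succOf S v) ∈ S) ∧ (∀ v w, (v, w) ∈ S → w = succOf S v) := by
  rw [mem_FunGraphs] at hS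
  refine ⟨fun v => succOf_mem (card_one_exists_out (hS.2.1 v)), fun v w hw => ?_⟩
  exact out_unique (hS.2.1 v) w _ hw (succOf_mem (card_one_exists_out (hS.2.1 v)))

lemma funGraphs_orbit_hits {E S : Finset (V × V)} {i : V} (hS : S ∈ FunGraphs E i) (v : V) :
    ∃ t, (succOf S)^[t] v = i := by
  set f := succOf S with hfdef
  have hf : ∀ w, (w, f w) ∈ S := (funGraphs_succ hS).1
  obtain ⟨a, p, hp, hc⟩ := exists_period f v
  set c := f^[a] v with hcdef
  by_cases hr : ∃ s, s < p ∧ f^[s] c = i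
  · obtain ⟨s, _, hs⟩ := hr
    exact ⟨a + s, by rw [Nat.add_comm, Function.iterate_add_apply]; exact hs⟩
  · push_neg at hr
    exfalso
    apply (mem_FunGraphs.mp hS).2.2
    refine ⟨c, iter_cycle hp (fun s hs => ?_) hc⟩
    rw [Function.iterate_succ_apply']
    exact Finset.mem_filter.mpr ⟨hf _, hr s hs⟩

lemma funGraphs_return {E S : Finset (V × V)} {i : V} (hS : S ∈ FunGraphs E i) :
    ∃ m, 1 ≤ m ∧ (succOf S)^[m] i = i := by
  obtain ⟨t, ht⟩ := funGraphs_orbit_hits hS (succOf S i)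
  exact ⟨t + 1, by omega, by rw [Function.iterate_succ_apply]; exact ht⟩

lemma insert_mem_funGraphs_right {E T : Finset (V × V)} {j i : V}
    (hloop : NoSelfLoops E) (heE : (j, i) ∈ E) (hT : IsSpanningTreeTo E j T) :
    insert (j, i) T ∈ FunGraphs E i := by
  have hji : j ≠ i := hloop (j, i) heE
  rw [mem_FunGraphs]
  refine ⟨Finset.insert_subset heE hT.1, insert_filter_card hT (j, i) rfl, ?_⟩
  rw [Finset.filter_insert, if_pos hji]
  apply noCycle_insert
  · intro c hc
    rcases Finset.mem_insert.mp hc with hce | hcf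
    · exact hji (congrArg Prod.fst hce).symm
    · exact (Finset.mem_filter.mp hcf).2 rfl
  · intro hcy
    exact hT.2.1 (cycle_mono (Finset.filter_subset _ _) hcy)

lemma pred_of_insert {E S T : Finset (V × V)} {j i : V}
    (hS : S ∈ FunGraphs E i) (hSe : S = insert (j, i) T)
    (hT : IsSpanningTreeTo E j T) :
    ∃ m, 1 ≤ m ∧ (succOf S)^[m] i = i ∧ (succOf S)^[m - 1] i = j := by
  set f := succOf S with hfdef
  have huniq := (funGraphs_succ hS).2
  have hsub : T ⊆ S := by rw [hSe]; exact Finset.subset_insert _ _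
  obtain ⟨t, ht⟩ := rtg_orbit huniq hsub (tree_reach_s2 hT i)
  have hfe : f j = i := by
    have heS : (j, i) ∈ S := by rw [hSe]; exact Finset.mem_insert_self _ _
    exact (huniq j i heS).symm
  refine ⟨t + 1, by omega, ?_, ?_⟩
  · rw [Function.iterate_succ_apply', ht, hfe]
  · simpa using ht

open Classical in
lemma markov_right {E : Finset (V × V)} (hloop : NoSelfLoops E) (k : V × V → ℝ) (i : V) :
    ∑ e ∈ E.filter (fun e => e.2 = i), (k e * treeConst E k e.1)
      = ∑ S ∈ FunGraphs E i, ∏ e ∈ S, k e := by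
  have h1 : ∑ p ∈ (E.filter (fun e => e.2 = i)).sigma (fun e => Trees E e.1),
          (k p.1 * ∏ x ∈ p.2, k x)
      = ∑ e ∈ E.filter (fun e => e.2 = i), (k e * treeConst E k e.1) := by
    rw [Finset.sum_sigma]
    refine Finset.sum_congr rfl fun e he => ?_
    rw [treeConst_eq, Finset.mul_sum]
  rw [← h1]
  refine Finset.sum_bij (fun p _ => insert p.1 p.2) ?_ ?_ ?_ ?_
  · -- membership
    rintro ⟨e, T⟩ hp
    rw [Finset.mem_sigma, Finset.mem_filter] at hp
    obtain ⟨⟨heE, he2⟩, hT⟩ := hp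
    rw [mem_Trees] at hT
    dsimp only at *
    obtain ⟨j, i'⟩ := e
    dsimp only at he2
    subst he2
    exact insert_mem_funGraphs_right hloop heE hT
  · -- injectivity
    rintro ⟨e₁, T₁⟩ hp₁ ⟨e₂, T₂⟩ hp₂ heq
    rw [Finset.mem_sigma, Finset.mem_filter] at hp₁ hp₂
    obtain ⟨⟨he₁E, he₁2⟩, hT₁⟩ := hp₁
    obtain ⟨⟨he₂E, he₂2⟩, hT₂⟩ := hp₂
    rw [mem_Trees] at hT₁ hT₂
    dsimp only at *
    obtain ⟨j₁, i₁⟩ := e₁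
    obtain ⟨j₂, i₂⟩ := e₂
    dsimp only at he₁2 he₂2 hT₁ hT₂ heq he₁E he₂E
    rw [he₁2] at he₁E heq
    rw [he₂2] at he₂E heq
    have hS₁ : insert (j₁, i) T₁ ∈ FunGraphs E i :=
      insert_mem_funGraphs_right hloop he₁E hT₁
    obtain ⟨m₁, hm₁1, hm₁fix, hm₁pred⟩ := pred_of_insert hS₁ rfl hT₁
    obtain ⟨m₂, hm₂1, hm₂fix, hm₂pred⟩ := pred_of_insert hS₁ heq hT₂
    have hexP : ∃ m, 1 ≤ m ∧ (succOf (insert (j₁, i) T₁))^[m] i = i := ⟨m₁, hm₁1, hm₁fix⟩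
    set f := succOf (insert (j₁, i) T₁) with hfdef
    have hmin : ∀ s, 1 ≤ s → s < Nat.find hexP → f^[s] i ≠ i :=
      fun s h1 h2 heq' => Nat.find_min hexP h2 ⟨h1, heq'⟩
    have hspec := Nat.find_spec hexP
    have hj₁ : f^[m₁ - 1] i = f^[Nat.find hexP - 1] i :=
      pred_canonical f hspec.1 hm₁1 hspec.2 hm₁fix hmin
    have hj₂ : f^[m₂ - 1] i = f^[Nat.find hexP - 1] i :=
      pred_canonical f hspec.1 hm₂1 hspec.2 hm₂fix hmin
    have hjj : j₁ = j₂ := by rw [← hm₁pred, ← hm₂pred, hj₁, hj₂]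
    have hTT : T₁ = T₂ := by
      have h₁ : (insert (j₁, i) T₁).erase (j₁, i) = T₁ :=
        Finset.erase_insert (root_no_out_s2 hT₁ i)
      have h₂ : (insert (j₂, i) T₂).erase (j₂, i) = T₂ :=
        Finset.erase_insert (root_no_out_s2 hT₂ i)
      rw [← h₁, ← h₂, heq, hjj]
    rw [he₁2, he₂2, hjj, hTT]
  · -- surjectivity
    intro S hS
    have hSE := (mem_FunGraphs.mp hS).1
    have hcard := (mem_FunGraphs.mp hS).2.1
    set f := succOf S with hfdef
    have hf : ∀ w, (w, f w) ∈ S := (funGraphs_succ hS).1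
    have huniq := (funGraphs_succ hS).2
    have hexP : ∃ m, 1 ≤ m ∧ f^[m] i = i := funGraphs_return hS
    set m := Nat.find hexP with hmdef
    have hm1 : 1 ≤ m := (Nat.find_spec hexP).1
    have hmfix : f^[m] i = i := (Nat.find_spec hexP).2
    set j := f^[m - 1] i with hjdef
    have hfj : f j = i := by
      rw [hjdef, ← Function.iterate_succ_apply' f (m - 1) i,
        Nat.succ_eq_add_one, Nat.sub_add_cancel hm1]
      exact hmfix
    have hjS : (j, i) ∈ S := by rw [← hfj]; exact hf j
    have hjE : (j, i) ∈ E := hSE hjS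
    have hji : j ≠ i := hloop (j, i) hjE
    set T := S.erase (j, i) with hTdef
    have hTsub : T ⊆ S := Finset.erase_subset _ _
    have hTcard : ∀ v, v ≠ j → (T.filter (fun e => e.1 = v)).card = 1 := by
      intro v hv
      rw [hTdef, Finset.filter_erase, Finset.erase_eq_of_notMem]
      · exact hcard v
      · intro hmem
        exact hv ((Finset.mem_filter.mp hmem).2).symm
    have hreach : ∀ v, dReach T v j := by
      intro v
      have hhit : ∃ t, f^[t] v = j := by
        obtain ⟨t₀, ht₀⟩ := funGraphs_orbit_hits hS v
        rw [← hfdef] at ht₀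
        exact ⟨(m - 1) + t₀, by rw [Function.iterate_add_apply, ht₀]⟩
      have hspec := Nat.find_spec hhit
      have hpath := iter_path T f (Nat.find hhit) v (fun s hs => by
        rw [Function.iterate_succ_apply']
        refine Finset.mem_erase.mpr ⟨?_, hf _⟩
        intro hh
        exact Nat.find_min hhit hs (congrArg Prod.fst hh))
      show Relation.ReflTransGen _ v j
      rwa [hspec] at hpath
    have hT : IsSpanningTreeTo E j T := by
      refine ⟨hTsub.trans hSE, ?_, hTcard⟩
      rintro ⟨v, hv⟩
      refine noCycle_of_reach_sink T j ?_ ?_ v (hreach v) hv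
      · intro a b c hab hac
        exact (huniq a b (hTsub hab)).trans (huniq a c (hTsub hac)).symm
      · intro c hc
        obtain ⟨hne, hmem⟩ := Finset.mem_erase.mp hc
        have hci : c = i := (huniq j c hmem).trans hfj
        exact hne (by rw [hci])
    refine ⟨⟨(j, i), T⟩, ?_, ?_⟩
    · rw [Finset.mem_sigma, Finset.mem_filter]
      exact ⟨⟨hjE, rfl⟩, mem_Trees.mpr hT⟩
    · exact Finset.insert_erase hjS
  · -- values
    rintro ⟨e, T⟩ hp
    rw [Finset.mem_sigma, Finset.mem_filter] at hp
    obtain ⟨⟨heE, he2⟩, hT⟩ := hp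
    rw [mem_Trees] at hT
    dsimp only at *
    have hnot : e ∉ T := fun heT =>
      root_no_out_s2 hT e.2 (by rw [Prod.mk.eta]; exact heT)
    rw [Finset.prod_insert hnot]

end MarkovRight
section LapSums

variable [Fintype V] [DecidableEq V]

lemma sum_ite_out (E : Finset (V × V)) (i : V) (g : V × V → ℝ) :
    ∑ j : V, (if (i, j) ∈ E then g (i, j) else 0)
      = ∑ e ∈ E.filter (fun e => e.1 = i), g e := by
  rw [← Finset.sum_filter]
  refine Finset.sum_nbij' (fun j => (i, j)) (fun e => e.2) ?_ ?_ ?_ ?_ ?_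
  · intro j hj
    rw [Finset.mem_filter] at hj ⊢
    exact ⟨hj.2, rfl⟩
  · intro e he
    rw [Finset.mem_filter] at he ⊢
    exact ⟨Finset.mem_univ _, by rw [← he.2, Prod.mk.eta]; exact he.1⟩
  · intro j _; rfl
  · intro e he
    rw [Finset.mem_filter] at he
    show (i, e.2) = e
    rw [← he.2]
  · intro j _; rfl

lemma sum_ite_inn (E : Finset (V × V)) (i : V) (g : V × V → ℝ) :
    ∑ j : V, (if (j, i) ∈ E then g (j, i) else 0)
      = ∑ e ∈ E.filter (fun e => e.2 = i), g e := by
  rw [← Finset.sum_filter]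
  refine Finset.sum_nbij' (fun j => (j, i)) (fun e => e.1) ?_ ?_ ?_ ?_ ?_
  · intro j hj
    rw [Finset.mem_filter] at hj ⊢
    exact ⟨hj.2, rfl⟩
  · intro e he
    rw [Finset.mem_filter] at he ⊢
    exact ⟨Finset.mem_univ _, by rw [← he.2, Prod.mk.eta]; exact he.1⟩
  · intro j _; rfl
  · intro e he
    rw [Finset.mem_filter] at he
    show (e.1, i) = e
    rw [← he.2]
  · intro j _; rfl

lemma lap_apply_ne {E : Finset (V × V)} {k : V × V → ℝ} {i j : V} (h : i ≠ j) :
    digraphLaplacian E k i j = if (j, i) ∈ E then k (j, i) else 0 := by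
  simp [digraphLaplacian, h]

lemma lap_apply_diag (E : Finset (V × V)) (k : V × V → ℝ) (j : V) :
    digraphLaplacian E k j j = -(∑ e ∈ E.filter (fun e => e.1 = j), k e) := by
  simp [digraphLaplacian]

lemma lap_col_sum {E : Finset (V × V)} (hloop : NoSelfLoops E) (k : V × V → ℝ) (j : V) :
    ∑ i : V, digraphLaplacian E k i j = 0 := by
  rw [← Finset.sum_erase_add _ _ (Finset.mem_univ j), lap_apply_diag]
  have h1 : ∑ i ∈ Finset.univ.erase j, digraphLaplacian E k i j
      = ∑ i ∈ Finset.univ.erase j, (if (j, i) ∈ E then k (j, i) else 0) :=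
    Finset.sum_congr rfl fun i hi => lap_apply_ne (Finset.mem_erase.mp hi).1
  have h2 : (if (j, j) ∈ E then k (j, j) else 0) = 0 :=
    if_neg (fun h => hloop (j, j) h rfl)
  rw [h1, Finset.sum_erase (f := fun i => if (j, i) ∈ E then k (j, i) else 0) (a := j)
    Finset.univ h2]
  have h3 := sum_ite_out E j k
  rw [h3, add_neg_cancel]

lemma lap_mulVec_treeConst {E : Finset (V × V)} (hloop : NoSelfLoops E) (k : V × V → ℝ) :
    digraphLaplacian E k *ᵥ treeConst E k = 0 := by
  funext i
  simp only [Matrix.mulVec, dotProduct, Pi.zero_apply]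
  rw [← Finset.sum_erase_add _ _ (Finset.mem_univ i)]
  have h1 : ∑ j ∈ Finset.univ.erase i, digraphLaplacian E k i j * treeConst E k j
      = ∑ j ∈ Finset.univ.erase i, (if (j, i) ∈ E then k (j, i) * treeConst E k j else 0) := by
    refine Finset.sum_congr rfl fun j hj => ?_
    rw [lap_apply_ne ((Finset.mem_erase.mp hj).1).symm, ite_mul, zero_mul]
  have h2 : (if (i, i) ∈ E then k (i, i) * treeConst E k i else 0) = 0 :=
    if_neg (fun h => hloop (i, i) h rfl)
  rw [h1, Finset.sum_erase
    (f := fun j => if (j, i) ∈ E then k (j, i) * treeConst E k j else 0) (a := i)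
    Finset.univ h2]
  have h3 := sum_ite_inn E i (fun e => k e * treeConst E k e.1)
  dsimp only at h3
  rw [h3, lap_apply_diag, neg_mul, Finset.sum_mul]
  have h4 : ∑ e ∈ E.filter (fun e => e.1 = i), k e * treeConst E k i
      = ∑ S ∈ FunGraphs E i, ∏ e ∈ S, k e := markov_left hloop k i
  have h5 : ∑ e ∈ E.filter (fun e => e.2 = i), k e * treeConst E k e.1
      = ∑ S ∈ FunGraphs E i, ∏ e ∈ S, k e := markov_right hloop k i
  rw [h5, ← h4]
  exact add_neg_cancel _

lemma lap_balance {E : Finset (V × V)} (hloop : NoSelfLoops E) {k : V × V → ℝ}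
    {x : V → ℝ} (hx : (digraphLaplacian E k)ᵀ *ᵥ x = 0) (j : V) :
    (∑ e ∈ E.filter (fun e => e.1 = j), k e) * x j
      = ∑ e ∈ E.filter (fun e => e.1 = j), k e * x e.2 := by
  have h0 := congrFun hx j
  simp only [Matrix.mulVec, dotProduct, Matrix.transpose_apply, Pi.zero_apply] at h0
  rw [← Finset.sum_erase_add _ _ (Finset.mem_univ j)] at h0
  have h1 : ∑ i ∈ Finset.univ.erase j, digraphLaplacian E k i j * x i
      = ∑ i ∈ Finset.univ.erase j, (if (j, i) ∈ E then k (j, i) * x i else 0) := by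
    refine Finset.sum_congr rfl fun i hi => ?_
    rw [lap_apply_ne (Finset.mem_erase.mp hi).1, ite_mul, zero_mul]
  have h2 : (if (j, j) ∈ E then k (j, j) * x j else 0) = 0 :=
    if_neg (fun h => hloop (j, j) h rfl)
  rw [h1, Finset.sum_erase
    (f := fun i => if (j, i) ∈ E then k (j, i) * x i else 0) (a := j)
    Finset.univ h2] at h0
  have h3 := sum_ite_out E j (fun e => k e * x e.2)
  dsimp only at h3
  rw [h3, lap_apply_diag, neg_mul] at h0
  linarith [h0]

lemma lap_transpose_const {E : Finset (V × V)} (hloop : NoSelfLoops E) {k : V × V → ℝ}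
    (hk : ∀ e ∈ E, 0 < k e) (hsc : StronglyConnected E)
    {x : V → ℝ} (hx : (digraphLaplacian E k)ᵀ *ᵥ x = 0) (a b : V) : x a = x b := by
  obtain ⟨v0, -, hmax⟩ := Finset.exists_max_image Finset.univ x ⟨a, Finset.mem_univ a⟩
  have hstep : ∀ j, x j = x v0 → ∀ c, (j, c) ∈ E → x c = x v0 := by
    intro j hj c hjc
    have hbal := lap_balance hloop hx j
    have hzero : ∑ e ∈ E.filter (fun e => e.1 = j), k e * (x v0 - x e.2) = 0 := by
      have : ∑ e ∈ E.filter (fun e => e.1 = j), k e * (x v0 - x e.2)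
          = (∑ e ∈ E.filter (fun e => e.1 = j), k e) * x v0
            - ∑ e ∈ E.filter (fun e => e.1 = j), k e * x e.2 := by
        rw [Finset.sum_mul, ← Finset.sum_sub_distrib]
        refine Finset.sum_congr rfl fun e he => ?_
        ring
      rw [this, ← hj, hbal, sub_self]
    have hnonneg : ∀ e ∈ E.filter (fun e => e.1 = j), 0 ≤ k e * (x v0 - x e.2) := by
      intro e he
      have hkpos : 0 < k e := hk e (Finset.mem_filter.mp he).1
      have hle : x e.2 ≤ x v0 := hmax e.2 (Finset.mem_univ _)
      exact mul_nonneg hkpos.le (by linarith)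
    have hterm := (Finset.sum_eq_zero_iff_of_nonneg hnonneg).mp hzero (j, c)
      (Finset.mem_filter.mpr ⟨hjc, rfl⟩)
    dsimp only at hterm
    have hkpos : 0 < k (j, c) := hk (j, c) hjc
    have h7 : x v0 - x c = 0 := by
      rcases mul_eq_zero.mp hterm with h | h
      · exact absurd h hkpos.ne'
      · exact h
    linarith
  have hall : ∀ w, x w = x v0 := by
    intro w
    have hreach : Relation.ReflTransGen (fun a b => (a, b) ∈ E) v0 w := hsc v0 w
    induction hreach with
    | refl => rfl
    | @tail z w' hvz hzw ih => exact hstep z ih w' hzw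
  rw [hall a, hall b]

end LapSums
section LinAlg

variable [Fintype V] [DecidableEq V]

lemma ker_lap {E : Finset (V × V)} {k : V × V → ℝ} (hloop : NoSelfLoops E)
    (hk : ∀ e ∈ E, 0 < k e) (hsc : StronglyConnected E) [Nonempty V] :
    LinearMap.ker (digraphLaplacian E k).mulVecLin = Submodule.span ℝ {treeConst E k} := by
  have hKpos : ∀ i, 0 < treeConst E k i := treeConst_pos hk hsc
  have hKne : treeConst E k ≠ 0 := by
    intro h
    have h2 := hKpos (Classical.arbitrary V)
    rw [h] at h2
    simp at h2
  have hle : Submodule.span ℝ {treeConst E k} ≤ LinearMap.ker (digraphLaplacian E k).mulVecLin := by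
    rw [Submodule.span_singleton_le_iff_mem, LinearMap.mem_ker, Matrix.mulVecLin_apply]
    exact lap_mulVec_treeConst hloop k
  have hkerT : LinearMap.ker ((digraphLaplacian E k)ᵀ).mulVecLin
      ≤ Submodule.span ℝ {(fun _ => 1 : V → ℝ)} := by
    intro x hx
    rw [LinearMap.mem_ker, Matrix.mulVecLin_apply] at hx
    rw [Submodule.mem_span_singleton]
    refine ⟨x (Classical.arbitrary V), ?_⟩
    funext w
    simp only [Pi.smul_apply, smul_eq_mul, mul_one]
    exact lap_transpose_const hloop hk hsc hx (Classical.arbitrary V) w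
  have hones : Module.finrank ℝ (Submodule.span ℝ {(fun _ => 1 : V → ℝ)}) = 1 := by
    apply finrank_span_singleton
    intro h
    have h2 := congrFun h (Classical.arbitrary V)
    simpa using h2
  have hkerTle : Module.finrank ℝ (LinearMap.ker ((digraphLaplacian E k)ᵀ).mulVecLin) ≤ 1 := by
    calc Module.finrank ℝ (LinearMap.ker ((digraphLaplacian E k)ᵀ).mulVecLin)
        ≤ Module.finrank ℝ (Submodule.span ℝ {(fun _ => 1 : V → ℝ)}) :=
          Submodule.finrank_mono hkerT
      _ = 1 := hones
  have hrank : ((digraphLaplacian E k)ᵀ).rank = (digraphLaplacian E k).rank :=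
    Matrix.rank_transpose (digraphLaplacian E k)
  have h1 := LinearMap.finrank_range_add_finrank_ker (digraphLaplacian E k).mulVecLin
  have h2 := LinearMap.finrank_range_add_finrank_ker ((digraphLaplacian E k)ᵀ).mulVecLin
  rw [Module.finrank_pi ℝ] at h1 h2
  have hrL : Module.finrank ℝ (LinearMap.range (digraphLaplacian E k).mulVecLin)
      = (digraphLaplacian E k).rank := rfl
  have hrLT : Module.finrank ℝ (LinearMap.range ((digraphLaplacian E k)ᵀ).mulVecLin)
      = ((digraphLaplacian E k)ᵀ).rank := rfl
  rw [hrL] at h1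
  rw [hrLT, hrank] at h2
  have hker1 : Module.finrank ℝ (LinearMap.ker (digraphLaplacian E k).mulVecLin) ≤ 1 := by omega
  have hspan1 : Module.finrank ℝ (Submodule.span ℝ {treeConst E k}) = 1 :=
    finrank_span_singleton hKne
  exact (Submodule.eq_of_le_of_finrank_le hle (by rw [hspan1]; exact hker1)).symm

lemma incidence_transpose_apply (F : Finset (V × V)) (x : V → ℝ) (e : {e : V × V // e ∈ F}) :
    ((incidence F)ᵀ *ᵥ x) e = x (e : V × V).2 - x (e : V × V).1 := by
  simp [Matrix.mulVec, dotProduct, incidence, sub_mul, Finset.sum_sub_distrib,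
    Finset.sum_ite_eq, ite_mul]

lemma incidence_col_sum (F : Finset (V × V)) (e : {e : V × V // e ∈ F}) :
    ∑ i : V, incidence F i e = 0 := by
  simp [incidence, Finset.sum_sub_distrib, Finset.sum_ite_eq]

lemma incidence_ker {F : Finset (V × V)} (hF : IsDirectedTree F) [Nonempty V] :
    LinearMap.ker ((incidence F)ᵀ).mulVecLin
      = Submodule.span ℝ {(fun _ => 1 : V → ℝ)} := by
  apply le_antisymm
  · intro x hx
    rw [LinearMap.mem_ker, Matrix.mulVecLin_apply] at hx
    have hedge : ∀ a b : V, ((a, b) ∈ F ∨ (b, a) ∈ F) → x a = x b := by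
      rintro a b (hab | hba)
      · have h0 := congrFun hx (⟨(a, b), hab⟩ : {e : V × V // e ∈ F})
        rw [incidence_transpose_apply] at h0
        have : x b - x a = 0 := h0
        linarith
      · have h0 := congrFun hx (⟨(b, a), hba⟩ : {e : V × V // e ∈ F})
        rw [incidence_transpose_apply] at h0
        have : x a - x b = 0 := h0
        linarith
    have hconst : ∀ a b : V, uReach F a b → x a = x b := by
      intro a b h
      induction h with
      | refl => rfl
      | @tail z w hz hzw ih => exact ih.trans (hedge z w hzw)
    rw [Submodule.mem_span_singleton]
    refine ⟨x (Classical.arbitrary V), ?_⟩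
    funext w
    simp only [Pi.smul_apply, smul_eq_mul, mul_one]
    exact (hconst w (Classical.arbitrary V) (hF.2 w (Classical.arbitrary V))).symm
  · rw [Submodule.span_singleton_le_iff_mem, LinearMap.mem_ker, Matrix.mulVecLin_apply]
    funext e
    rw [incidence_transpose_apply]
    simp

lemma ones_ne_zero [Nonempty V] : (fun _ => 1 : V → ℝ) ≠ 0 := by
  intro h
  have h2 := congrFun h (Classical.arbitrary V)
  simpa using h2

lemma incidence_rank {F : Finset (V × V)} (hF : IsDirectedTree F) [Nonempty V] :
    (incidence F).rank = Fintype.card V - 1 := by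
  have h2 := LinearMap.finrank_range_add_finrank_ker ((incidence F)ᵀ).mulVecLin
  rw [Module.finrank_pi ℝ] at h2
  have hker : Module.finrank ℝ (LinearMap.ker ((incidence F)ᵀ).mulVecLin) = 1 := by
    rw [incidence_ker hF]
    exact finrank_span_singleton ones_ne_zero
  rw [hker] at h2
  have hrT : Module.finrank ℝ (LinearMap.range ((incidence F)ᵀ).mulVecLin)
      = ((incidence F)ᵀ).rank := rfl
  rw [hrT] at h2
  rw [← Matrix.rank_transpose (incidence F)]
  omega

lemma incidence_ker_bot {F : Finset (V × V)} (hF : IsDirectedTree F) [Nonempty V] :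
    LinearMap.ker (incidence F).mulVecLin = ⊥ := by
  have h1 := LinearMap.finrank_range_add_finrank_ker (incidence F).mulVecLin
  rw [Module.finrank_pi ℝ, Fintype.card_coe, hF.1] at h1
  have hr : Module.finrank ℝ (LinearMap.range (incidence F).mulVecLin)
      = (incidence F).rank := rfl
  rw [hr, incidence_rank hF] at h1
  rw [← Submodule.finrank_eq_zero]
  have hcard : 1 ≤ Fintype.card V := Fintype.card_pos
  omega

noncomputable def sumLin : (V → ℝ) →ₗ[ℝ] ℝ := ∑ i : V, LinearMap.proj i

lemma sumLin_apply (x : V → ℝ) : sumLin x = ∑ i : V, x i := by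
  simp [sumLin]

lemma incidence_range {F : Finset (V × V)} (hF : IsDirectedTree F) [Nonempty V] :
    LinearMap.range (incidence F).mulVecLin = LinearMap.ker (sumLin (V := V)) := by
  have hsub : LinearMap.range (incidence F).mulVecLin ≤ LinearMap.ker sumLin := by
    rintro x ⟨u, rfl⟩
    rw [LinearMap.mem_ker, Matrix.mulVecLin_apply, sumLin_apply]
    simp only [Matrix.mulVec, dotProduct]
    rw [Finset.sum_comm]
    apply Finset.sum_eq_zero
    intro e _
    rw [← Finset.sum_mul, incidence_col_sum, zero_mul]
  have hsurj : LinearMap.range (sumLin (V := V)) = ⊤ := by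
    rw [LinearMap.range_eq_top]
    intro r
    refine ⟨fun i => if i = Classical.arbitrary V then r else 0, ?_⟩
    rw [sumLin_apply]
    simp
  have h1 := LinearMap.finrank_range_add_finrank_ker (sumLin (V := V))
  rw [Module.finrank_pi ℝ, hsurj, finrank_top, Module.finrank_self] at h1
  have h2 : Module.finrank ℝ (LinearMap.range (incidence F).mulVecLin)
      = Fintype.card V - 1 := incidence_rank hF
  refine Submodule.eq_of_le_of_finrank_le hsub ?_
  rw [h2]
  omega

end LinAlg
section Main

variable [Fintype V] [DecidableEq V]

lemma main_nonempty [Nonempty V]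
    (E : Finset (V × V)) (hloop : NoSelfLoops E)
    (k : V × V → ℝ) (hk : ∀ e ∈ E, 0 < k e)
    (hsc : StronglyConnected E)
    (F : Finset (V × V)) (hF : IsDirectedTree F) :
    (∃! A : Matrix {e : V × V // e ∈ F} {e : V × V // e ∈ F} ℝ,
      digraphLaplacian E k * Matrix.diagonal (treeConst E k) = -(incidence F * A * (incidence F)ᵀ)) ∧
    (∀ A : Matrix {e : V × V // e ∈ F} {e : V × V // e ∈ F} ℝ,
      digraphLaplacian E k * Matrix.diagonal (treeConst E k) = -(incidence F * A * (incidence F)ᵀ) →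
      IsUnit A) := by
  set M := digraphLaplacian E k * Matrix.diagonal (treeConst E k) with hM
  have hMentry : ∀ i j, M i j = digraphLaplacian E k i j * treeConst E k j := by
    intro i j
    rw [hM, Matrix.mul_diagonal]
  have hMcol : ∀ j, ∑ i : V, M i j = 0 := by
    intro j
    calc ∑ i : V, M i j = ∑ i : V, digraphLaplacian E k i j * treeConst E k j :=
          Finset.sum_congr rfl fun i _ => hMentry i j
      _ = (∑ i : V, digraphLaplacian E k i j) * treeConst E k j := (Finset.sum_mul _ _ _).symm
      _ = 0 := by rw [lap_col_sum hloop, zero_mul]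
  have hMrow : ∀ i, ∑ j : V, M i j = 0 := by
    intro i
    have h0 := congrFun (lap_mulVec_treeConst hloop k) i
    simp only [Matrix.mulVec, dotProduct, Pi.zero_apply] at h0
    calc ∑ j : V, M i j = ∑ j : V, digraphLaplacian E k i j * treeConst E k j :=
          Finset.sum_congr rfl fun j _ => hMentry i j
      _ = 0 := h0
  have hrangeM : LinearMap.range M.mulVecLin ≤ LinearMap.range (incidence F).mulVecLin := by
    rw [incidence_range hF]
    rintro x ⟨y, rfl⟩
    rw [LinearMap.mem_ker, sumLin_apply, Matrix.mulVecLin_apply]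
    simp only [Matrix.mulVec, dotProduct]
    rw [Finset.sum_comm]
    apply Finset.sum_eq_zero
    intro j _
    rw [← Finset.sum_mul, hMcol, zero_mul]
  have hrangeMT : LinearMap.range Mᵀ.mulVecLin ≤ LinearMap.range (incidence F).mulVecLin := by
    rw [incidence_range hF]
    rintro x ⟨y, rfl⟩
    rw [LinearMap.mem_ker, sumLin_apply, Matrix.mulVecLin_apply]
    simp only [Matrix.mulVec, dotProduct, Matrix.transpose_apply]
    rw [Finset.sum_comm]
    apply Finset.sum_eq_zero
    intro j _
    rw [← Finset.sum_mul, hMrow, zero_mul]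
  obtain ⟨g, hg⟩ := LinearMap.exists_leftInverse_of_injective
    (incidence F).mulVecLin (incidence_ker_bot hF)
  set J := LinearMap.toMatrix' g with hJdef
  have hJg : J.mulVecLin = g := by
    rw [← Matrix.toLin'_apply', hJdef, Matrix.toLin'_toMatrix']
  have hJI : J * incidence F = 1 := by
    apply Matrix.toLin'.injective
    rw [Matrix.toLin'_mul, Matrix.toLin'_one, hJdef, Matrix.toLin'_toMatrix',
      Matrix.toLin'_apply']
    exact hg
  have habs : ∀ N : Matrix V V ℝ,
      LinearMap.range N.mulVecLin ≤ LinearMap.range (incidence F).mulVecLin →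
      incidence F * (J * N) = N := by
    intro N hN
    apply Matrix.toLin'.injective
    apply LinearMap.ext
    intro y
    rw [Matrix.toLin'_apply', Matrix.toLin'_apply', Matrix.mulVecLin_mul,
      Matrix.mulVecLin_mul]
    simp only [LinearMap.comp_apply]
    obtain ⟨u, hu⟩ := hN (LinearMap.mem_range_self N.mulVecLin y)
    rw [← hu]
    have hJu : J.mulVecLin ((incidence F).mulVecLin u) = u := by
      rw [hJg]
      have h2 := LinearMap.congr_fun hg u
      simpa using h2
    rw [hJu]
  have habsM : incidence F * (J * M) = M := habs M hrangeM
  have habsMT : incidence F * (J * Mᵀ) = Mᵀ := habs Mᵀ hrangeMT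
  have habsR : M * Jᵀ * (incidence F)ᵀ = M := by
    have h := congrArg Matrix.transpose habsMT
    rwa [Matrix.transpose_mul, Matrix.transpose_mul, Matrix.transpose_transpose] at h
  have hexists : M = -(incidence F * (-(J * M * Jᵀ)) * (incidence F)ᵀ) := by
    rw [Matrix.mul_neg, Matrix.neg_mul, neg_neg]
    have hassoc : incidence F * (J * M * Jᵀ) = incidence F * (J * M) * Jᵀ :=
      (Matrix.mul_assoc _ _ _).symm
    rw [hassoc, habsM, habsR]
  have hIJt : (incidence F)ᵀ * Jᵀ = 1 := by
    have h := congrArg Matrix.transpose hJI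
    rwa [Matrix.transpose_mul, Matrix.transpose_one] at h
  have hcalc : ∀ C : Matrix {e : V × V // e ∈ F} {e : V × V // e ∈ F} ℝ,
      J * (incidence F * C * (incidence F)ᵀ) * Jᵀ = C := by
    intro C
    have h1 : J * (incidence F * C * (incidence F)ᵀ) * Jᵀ
        = (J * incidence F) * C * ((incidence F)ᵀ * Jᵀ) := by
      simp only [Matrix.mul_assoc]
    rw [h1, hJI, hIJt, Matrix.one_mul, Matrix.mul_one]
  have huniq : ∀ A B : Matrix {e : V × V // e ∈ F} {e : V × V // e ∈ F} ℝ,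
      M = -(incidence F * A * (incidence F)ᵀ) →
      M = -(incidence F * B * (incidence F)ᵀ) → A = B := by
    intro A B hA hB
    have h : incidence F * A * (incidence F)ᵀ = incidence F * B * (incidence F)ᵀ :=
      neg_injective (hA.symm.trans hB)
    rw [← hcalc A, ← hcalc B, h]
  constructor
  · exact ⟨-(J * M * Jᵀ), hexists, fun A hA => huniq A _ hA hexists⟩
  · intro A hA
    rw [← Matrix.mulVec_injective_iff_isUnit]
    have hker : ∀ v, A *ᵥ v = 0 → v = 0 := by
      intro v hv
      have hsurjT : LinearMap.range ((incidence F)ᵀ).mulVecLin = ⊤ := by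
        apply Submodule.eq_top_of_finrank_eq
        have h1 : Module.finrank ℝ (LinearMap.range ((incidence F)ᵀ).mulVecLin)
            = ((incidence F)ᵀ).rank := rfl
        rw [h1, Matrix.rank_transpose, incidence_rank hF, Module.finrank_pi ℝ,
          Fintype.card_coe, hF.1]
      obtain ⟨u, hu⟩ : ∃ u, (incidence F)ᵀ *ᵥ u = v := by
        have hmem : v ∈ LinearMap.range ((incidence F)ᵀ).mulVecLin := by
          rw [hsurjT]; trivial
        obtain ⟨u, hu⟩ := hmem
        exact ⟨u, hu⟩
      have hMu : M *ᵥ u = 0 := by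
        rw [hA, Matrix.neg_mulVec, ← Matrix.mulVec_mulVec, ← Matrix.mulVec_mulVec,
          hu, hv, Matrix.mulVec_zero, neg_zero]
      have hdiag : digraphLaplacian E k *ᵥ (Matrix.diagonal (treeConst E k) *ᵥ u) = 0 := by
        rw [Matrix.mulVec_mulVec, ← hM]
        exact hMu
      have hmem2 : Matrix.diagonal (treeConst E k) *ᵥ u
          ∈ LinearMap.ker (digraphLaplacian E k).mulVecLin := by
        rw [LinearMap.mem_ker, Matrix.mulVecLin_apply]
        exact hdiag
      rw [ker_lap hloop hk hsc, Submodule.mem_span_singleton] at hmem2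
      obtain ⟨c, hc⟩ := hmem2
      have hu_const : ∀ i, u i = c := by
        intro i
        have h2 := congrFun hc i
        rw [Matrix.mulVec_diagonal] at h2
        simp only [Pi.smul_apply, smul_eq_mul] at h2
        have hKpos := treeConst_pos hk hsc i
        have h3 : treeConst E k i * c = treeConst E k i * u i := by
          rw [mul_comm (treeConst E k i) c]
          exact h2
        exact (mul_left_cancel₀ hKpos.ne' h3).symm
      rw [← hu]
      have hu1 : u = fun _ => c := funext hu_const
      rw [hu1]
      funext e
      rw [incidence_transpose_apply]
      simp
    intro x y hxy
    have h4 : A *ᵥ (x - y) = 0 := by rw [Matrix.mulVec_sub, hxy, sub_self]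
    exact sub_eq_zero.mp (hker _ h4)

end Main

/-- (Proposition 1) For a strongly connected labeled simple digraph `G_k = (V,E,k)` and an
auxiliary digraph `G_ℰ = (V,ℰ)`, there is a unique matrix `𝒜_{k,ℰ}` (the core matrix) with
`A_k diag(K_k) = -I_ℰ 𝒜_{k,ℰ} I_ℰᵀ`, and this matrix is invertible. -/
theorem core_matrix_exists_unique_invertible
    {V : Type*} [Fintype V] [DecidableEq V]
    (E : Finset (V × V)) (hloop : NoSelfLoops E)
    (k : V × V → ℝ) (hk : ∀ e ∈ E, 0 < k e)
    (hsc : StronglyConnected E)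
    (F : Finset (V × V)) (hF : IsDirectedTree F) :
    (∃! A : Matrix {e : V × V // e ∈ F} {e : V × V // e ∈ F} ℝ,
      digraphLaplacian E k * Matrix.diagonal (treeConst E k) = -(incidence F * A * (incidence F)ᵀ)) ∧
    (∀ A : Matrix {e : V × V // e ∈ F} {e : V × V // e ∈ F} ℝ,
      digraphLaplacian E k * Matrix.diagonal (treeConst E k) = -(incidence F * A * (incidence F)ᵀ) →
      IsUnit A) := by
  rcases isEmpty_or_nonempty V with hemp | hne
  · have hsubE : IsEmpty {e : V × V // e ∈ F} :=
      ⟨fun e => (inferInstance : IsEmpty (V × V)).false e.1⟩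
    constructor
    · refine ⟨0, ?_, ?_⟩
      · apply Matrix.ext
        intro i j
        exact isEmptyElim i
      · intro B hB
        apply Matrix.ext
        intro e f
        exact isEmptyElim e
    · intro A hA
      have hA1 : A = 1 := by
        apply Matrix.ext
        intro e f
        exact isEmptyElim e
      rw [hA1]
      exact isUnit_one
  · exact main_nonempty E hloop k hk hsc F hF
end

section
/- (Lemma B.1) Let G_k=(V,E,k) be a connected labeled simple digraph with exactly one absorbing strongly connected component (a strongly connected component from which no edge of G leaves). Then the column space of the Laplacian matrix A_k equals the column space of the incidence matrix I_E: im(A_k) = im(I_E) as subspaces of ℝ^V. -/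
open Matrix BigOperators Finset

variable {V : Type*}

/-- Vertex `v` lies in an absorbing strongly connected component of the digraph `E`
(no edge of `E` leaves the strongly connected component of `v`). -/
def InAbsorbingSCC {V : Type*} (E : Finset (V × V)) (v : V) : Prop :=
  ∀ w : V, dReach E v w → dReach E w v

-- column/dot computation for Laplacian
lemma lap_dot [Fintype V] [DecidableEq V] (E : Finset (V × V)) (hloop : NoSelfLoops E)
    (k : V × V → ℝ) (j : V) (x : V → ℝ) :
    ∑ i, digraphLaplacian E k i j * x i
      = ∑ e ∈ E.filter (fun e => e.1 = j), k e * (x e.2 - x j) := by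
  have hjj : (j, j) ∉ E := fun h => hloop _ h rfl
  rw [← Finset.add_sum_erase _ _ (Finset.mem_univ j)]
  have h1 : digraphLaplacian E k j j * x j = -(∑ e ∈ E.filter (fun e => e.1 = j), k e) * x j := by
    simp [digraphLaplacian]
  have h2 : ∑ i ∈ Finset.univ.erase j, digraphLaplacian E k i j * x i
      = ∑ i ∈ Finset.univ.erase j, (if (j, i) ∈ E then k (j, i) * x i else 0) := by
    refine Finset.sum_congr rfl fun i hi => ?_
    have : i ≠ j := Finset.ne_of_mem_erase hi
    simp [digraphLaplacian, this]
  have h3 : ∑ i ∈ Finset.univ.erase j, (if (j, i) ∈ E then k (j, i) * x i else 0)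
      = ∑ i, (if (j, i) ∈ E then k (j, i) * x i else 0) := by
    rw [Finset.sum_erase]
    simp [hjj]
  have h4 : ∑ i, (if (j, i) ∈ E then k (j, i) * x i else 0)
      = ∑ e ∈ E.filter (fun e => e.1 = j), k e * x e.2 := by
    rw [show (∑ i, (if (j, i) ∈ E then k (j, i) * x i else 0))
        = ∑ i ∈ Finset.univ.filter (fun i => (j, i) ∈ E), k (j, i) * x i from
      (Finset.sum_filter _ _).symm]
    refine Finset.sum_nbij' (fun i => (j, i)) (fun e => e.2) ?_ ?_ ?_ ?_ ?_
    · intro i hi; simp at hi ⊢; exact hi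
    · intro e he
      simp only [Finset.mem_filter, Finset.mem_univ, true_and] at he ⊢
      have : (j, e.2) = e := by ext <;> simp [he.2]
      rw [this]; exact he.1
    · intro i _; rfl
    · intro e he; simp at he; ext <;> simp [he.2]
    · intro i _; rfl
  rw [h1, h2, h3, h4]
  simp only [mul_sub, Finset.sum_sub_distrib, ← Finset.sum_mul]
  ring


-- dot computation for incidence transpose
lemma inc_dot [Fintype V] [DecidableEq V] (E : Finset (V × V))
    (e : {e : V × V // e ∈ E}) (x : V → ℝ) :
    ∑ i, incidence E i e * x i = x (e : V × V).2 - x (e : V × V).1 := by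
  simp [incidence, sub_mul, Finset.sum_sub_distrib, ite_mul]

-- every vertex reaches an absorbing vertex
lemma reach_absorbing [Fintype V] (E : Finset (V × V)) (w : V) :
    ∃ u, dReach E w u ∧ InAbsorbingSCC E u := by
  classical
  have key : ∀ n (w : V), (Finset.univ.filter (dReach E w ·)).card ≤ n →
      ∃ u, dReach E w u ∧ InAbsorbingSCC E u := by
    intro n
    induction n with
    | zero =>
      intro w h
      exfalso
      have : w ∈ Finset.univ.filter (dReach E w ·) := by
        simp only [Finset.mem_filter, Finset.mem_univ, true_and]; exact Relation.ReflTransGen.refl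
      have := Finset.card_pos.2 ⟨w, this⟩
      omega
    | succ n ih =>
      intro w h
      by_cases hw : InAbsorbingSCC E w
      · exact ⟨w, Relation.ReflTransGen.refl, hw⟩
      · simp only [InAbsorbingSCC, not_forall] at hw
        obtain ⟨z, hz1, hz2⟩ := hw
        have hsub : Finset.univ.filter (dReach E z ·) ⊆ Finset.univ.filter (dReach E w ·) := by
          intro a ha
          simp only [Finset.mem_filter, Finset.mem_univ, true_and] at ha ⊢
          exact hz1.trans ha
        have hmem : w ∈ Finset.univ.filter (dReach E w ·) := by
          simp only [Finset.mem_filter, Finset.mem_univ, true_and]; exact Relation.ReflTransGen.refl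
        have hnmem : w ∉ Finset.univ.filter (dReach E z ·) := by
          simp only [Finset.mem_filter, Finset.mem_univ, true_and]
          exact hz2
        have hlt := Finset.card_lt_card (Finset.ssubset_iff_of_subset hsub |>.2 ⟨w, hmem, hnmem⟩)
        obtain ⟨u, hu1, hu2⟩ := ih z (by omega)
        exact ⟨u, hz1.trans hu1, hu2⟩
  exact key _ w le_rfl

-- maximum principle: harmonic functions are maximized along reachability
lemma harmonic_propagate [Fintype V] [DecidableEq V] (E : Finset (V × V))
    (k : V × V → ℝ) (hk : ∀ e ∈ E, 0 < k e) (x : V → ℝ)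
    (hx : ∀ j : V, ∑ e ∈ E.filter (fun e => e.1 = j), k e * (x e.2 - x j) = 0)
    {j w : V} (hmax : ∀ i, x i ≤ x j) (hr : dReach E j w) : ∀ i, x i ≤ x w := by
  induction hr with
  | refl => exact hmax
  | tail _ hbc ih =>
    rename_i b c _
    have hstep : x c = x b := by
      have hmem : (b, c) ∈ E.filter (fun e => e.1 = b) := by
        simp [hbc]
      have hterm : ∀ e ∈ E.filter (fun e => e.1 = b), k e * (x e.2 - x b) ≤ 0 := by
        intro e he
        simp only [Finset.mem_filter] at he
        have := hk e he.1
        have hle : x e.2 - x b ≤ 0 := by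
          have := le_trans (ih e.2) (le_refl (x b))
          linarith
        exact mul_nonpos_of_nonneg_of_nonpos this.le hle
      have := (Finset.sum_eq_zero_iff_of_nonpos hterm).1 (hx b) _ hmem
      have hkpos := hk _ (Finset.mem_filter.1 hmem).1
      have : x c - x b = 0 := by
        rcases mul_eq_zero.1 this with h | h
        · exact absurd h (ne_of_gt hkpos)
        · exact h
      linarith
    intro i
    rw [hstep]
    exact ih i


/-- (Lemma B.1) Let `G_k = (V,E,k)` be a connected labeled simple digraph with exactly one
absorbing strongly connected component. Then `im(A_k) = im(I_E)`. -/
theorem range_laplacian_eq_range_incidence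
    {V : Type*} [Fintype V] [DecidableEq V]
    (E : Finset (V × V)) (hloop : NoSelfLoops E)
    (k : V × V → ℝ) (hk : ∀ e ∈ E, 0 < k e)
    (hconn : ∀ i j : V, uReach E i j)
    (habs_ex : ∃ v : V, InAbsorbingSCC E v)
    (habs_uniq : ∀ u v : V, InAbsorbingSCC E u → InAbsorbingSCC E v → dReach E u v) :
    LinearMap.range (digraphLaplacian E k).mulVecLin =
      LinearMap.range (incidence E).mulVecLin := by
  classical
  obtain ⟨v, hv⟩ := habs_ex
  have hne : Nonempty V := ⟨v⟩
  set n := Fintype.card V with hn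
  have hn1 : 1 ≤ n := Fintype.card_pos
  set one : V → ℝ := fun _ => 1 with hone
  have hone_ne : one ≠ 0 := by
    intro h
    have := congrFun h v
    simp [hone] at this
  -- the sum functional
  set f : (V → ℝ) →ₗ[ℝ] ℝ := ∑ i : V, LinearMap.proj i with hf
  have hf_apply : ∀ x : V → ℝ, f x = ∑ i, x i := by
    intro x; simp [hf]
  have hf_surj : LinearMap.range f = ⊤ := by
    rw [LinearMap.range_eq_top]
    intro r
    refine ⟨Pi.single v r, ?_⟩
    rw [hf_apply]
    simp [Finset.sum_pi_single']
  have hfrank : Module.finrank ℝ (LinearMap.ker f) = n - 1 := by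
    have := LinearMap.finrank_range_add_finrank_ker f
    rw [hf_surj, finrank_top, Module.finrank_fintype_fun_eq_card] at this
    rw [Module.finrank_self] at this
    omega
  -- transpose mulVec entries
  have hlapT : ∀ (x : V → ℝ) (j : V), ((digraphLaplacian E k)ᵀ.mulVecLin x) j
      = ∑ e ∈ E.filter (fun e => e.1 = j), k e * (x e.2 - x j) := by
    intro x j
    rw [← lap_dot E hloop k j x]
    simp [Matrix.mulVecLin_apply, Matrix.mulVec, Matrix.vecMul, dotProduct,
      Matrix.transpose_apply, mul_comm]
  have hincT : ∀ (x : V → ℝ) (e : {e : V × V // e ∈ E}), ((incidence E)ᵀ.mulVecLin x) e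
      = x (e : V × V).2 - x (e : V × V).1 := by
    intro x e
    rw [← inc_dot E e x]
    simp [Matrix.mulVecLin_apply, Matrix.mulVec, Matrix.vecMul, dotProduct,
      Matrix.transpose_apply, mul_comm]
  -- every vertex reaches v
  have hreach_v : ∀ w : V, dReach E w v := by
    intro w
    obtain ⟨u, hu1, hu2⟩ := reach_absorbing E w
    exact hu1.trans (habs_uniq u v hu2 hv)
  -- kernel of the Laplacian transpose is the constants
  have hker_lap : LinearMap.ker (digraphLaplacian E k)ᵀ.mulVecLin = Submodule.span ℝ {one} := by
    apply le_antisymm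
    · intro x hx
      rw [LinearMap.mem_ker] at hx
      have hharm : ∀ j : V, ∑ e ∈ E.filter (fun e => e.1 = j), k e * (x e.2 - x j) = 0 := by
        intro j; rw [← hlapT x j, hx]; rfl
      have hharm' : ∀ j : V, ∑ e ∈ E.filter (fun e => e.1 = j), k e * ((-x) e.2 - (-x) j) = 0 := by
        intro j
        have : ∑ e ∈ E.filter (fun e => e.1 = j), k e * ((-x) e.2 - (-x) j)
            = -∑ e ∈ E.filter (fun e => e.1 = j), k e * (x e.2 - x j) := by
          rw [← Finset.sum_neg_distrib]
          refine Finset.sum_congr rfl fun e _ => ?_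
          simp; ring
        rw [this, hharm j, neg_zero]
      -- maximum attained, propagate to v
      obtain ⟨jmax, _, hjmax⟩ := Finset.exists_max_image Finset.univ x Finset.univ_nonempty
      have hmax : ∀ i, x i ≤ x v :=
        harmonic_propagate E k hk x hharm (fun i => hjmax i (Finset.mem_univ i)) (hreach_v jmax)
      obtain ⟨jmin, _, hjmin⟩ := Finset.exists_max_image Finset.univ (-x) Finset.univ_nonempty
      have hmin : ∀ i, (-x) i ≤ (-x) v :=
        harmonic_propagate E k hk (-x) hharm' (fun i => hjmin i (Finset.mem_univ i)) (hreach_v jmin)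
      have hconst : ∀ i, x i = x v := by
        intro i
        have h1 := hmax i
        have h2 := hmin i
        simp at h2
        linarith
      rw [Submodule.mem_span_singleton]
      exact ⟨x v, by funext i; simp [hone, hconst i]⟩
    · rw [Submodule.span_le, Set.singleton_subset_iff]
      rw [SetLike.mem_coe, LinearMap.mem_ker]
      funext j
      rw [hlapT one j]
      simp [hone]
  -- kernel of the incidence transpose is the constants
  have hker_inc : LinearMap.ker (incidence E)ᵀ.mulVecLin = Submodule.span ℝ {one} := by
    apply le_antisymm
    · intro x hx
      rw [LinearMap.mem_ker] at hx
      have hedge : ∀ e ∈ E, x e.1 = x e.2 := by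
        intro e he
        have := hincT x ⟨e, he⟩
        rw [hx] at this
        have : x e.2 - x e.1 = 0 := by simpa using this.symm
        linarith
      have hconst : ∀ a b : V, uReach E a b → x a = x b := by
        intro a b h
        induction h with
        | refl => rfl
        | tail _ hbc ih =>
          rename_i b' c' _
          rcases hbc with h | h
          · rw [ih, hedge _ h]
          · rw [ih, (hedge _ h).symm]
      rw [Submodule.mem_span_singleton]
      exact ⟨x v, by funext i; simp [hone, hconst v i (hconn v i)]⟩
    · rw [Submodule.span_le, Set.singleton_subset_iff]
      rw [SetLike.mem_coe, LinearMap.mem_ker]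
      funext e
      rw [hincT one e]
      simp [hone]
  -- finrank computations
  have hspan1 : Module.finrank ℝ (Submodule.span ℝ {one}) = 1 := finrank_span_singleton hone_ne
  have hrank_lap : Module.finrank ℝ (LinearMap.range (digraphLaplacian E k).mulVecLin) = n - 1 := by
    have h1 : (digraphLaplacian E k).rank = (digraphLaplacian E k)ᵀ.rank := (Matrix.rank_transpose _).symm
    have h2 := LinearMap.finrank_range_add_finrank_ker (digraphLaplacian E k)ᵀ.mulVecLin
    rw [hker_lap, hspan1, Module.finrank_fintype_fun_eq_card] at h2
    have h3 : (digraphLaplacian E k).rank = Module.finrank ℝ (LinearMap.range (digraphLaplacian E k).mulVecLin) := rfl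
    have h4 : (digraphLaplacian E k)ᵀ.rank = Module.finrank ℝ (LinearMap.range (digraphLaplacian E k)ᵀ.mulVecLin) := rfl
    omega
  have hrank_inc : Module.finrank ℝ (LinearMap.range (incidence E).mulVecLin) = n - 1 := by
    have h1 : (incidence E).rank = (incidence E)ᵀ.rank := (Matrix.rank_transpose _).symm
    have h2 := LinearMap.finrank_range_add_finrank_ker (incidence E)ᵀ.mulVecLin
    rw [hker_inc, hspan1, Module.finrank_fintype_fun_eq_card] at h2
    have h3 : (incidence E).rank = Module.finrank ℝ (LinearMap.range (incidence E).mulVecLin) := rfl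
    have h4 : (incidence E)ᵀ.rank = Module.finrank ℝ (LinearMap.range (incidence E)ᵀ.mulVecLin) := rfl
    omega
  -- ranges lie in ker f
  have hle_lap : LinearMap.range (digraphLaplacian E k).mulVecLin ≤ LinearMap.ker f := by
    rintro _ ⟨y, rfl⟩
    rw [LinearMap.mem_ker, hf_apply]
    have : ∑ i, ((digraphLaplacian E k).mulVecLin y) i = ∑ j, (∑ i, digraphLaplacian E k i j) * y j := by
      simp only [Matrix.mulVecLin_apply, Matrix.mulVec, dotProduct, Finset.sum_mul]
      rw [Finset.sum_comm]
    rw [this]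
    apply Finset.sum_eq_zero
    intro j _
    have : ∑ i, digraphLaplacian E k i j = ∑ i, digraphLaplacian E k i j * one i := by
      simp [hone]
    rw [this, lap_dot E hloop k j one]
    simp [hone]
  have hle_inc : LinearMap.range (incidence E).mulVecLin ≤ LinearMap.ker f := by
    rintro _ ⟨y, rfl⟩
    rw [LinearMap.mem_ker, hf_apply]
    have : ∑ i, ((incidence E).mulVecLin y) i = ∑ e, (∑ i, incidence E i e) * y e := by
      simp only [Matrix.mulVecLin_apply, Matrix.mulVec, dotProduct, Finset.sum_mul]
      rw [Finset.sum_comm]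
    rw [this]
    apply Finset.sum_eq_zero
    intro e _
    have : ∑ i, incidence E i e = ∑ i, incidence E i e * one i := by
      simp [hone]
    rw [this, inc_dot E e one]
    simp [hone]
  have h1 : LinearMap.range (digraphLaplacian E k).mulVecLin = LinearMap.ker f :=
    Submodule.eq_of_le_of_finrank_eq hle_lap (by rw [hrank_lap, hfrank])
  have h2 : LinearMap.range (incidence E).mulVecLin = LinearMap.ker f :=
    Submodule.eq_of_le_of_finrank_eq hle_inc (by rw [hrank_inc, hfrank])
  rw [h1, h2]
end
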